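/- For a Class A channel (Q_i(b_i|b^{i-1},a_i)) on finite alphabets, the supremum of directed information I(A^n → B^n) over all feedback input kernels P_i(a_i|a^{i-1},b^{i-1}) is attained in (equals the supremum over) the subclass of kernels satisfying the conditional independence P_i(a_i|a^{i-1},b^{i-1}) = π_i(a_i|b^{i-1}) for all i, that is, sup over the full class equals sup over the restricted class, and for restricted inputs I(A^n→B^n) = ∑_{i=0}^n I(A_i; B_i | B^{i-1}). -/

import Mathlib

open Finset

/-- Time indices `j ≤ i`. -/
def idxLe (n : ℕ) (i : Fin (n+1)) : Finset (Fin (n+1)) :=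
  Finset.univ.filter fun j => (j : ℕ) ≤ (i : ℕ)

/-- Time indices `j < i`. -/
def idxLt (n : ℕ) (i : Fin (n+1)) : Finset (Fin (n+1)) :=
  Finset.univ.filter fun j => (j : ℕ) < (i : ℕ)

/-- Time indices `i - M ≤ j < i` (the window of the last `M` outputs). -/
def idxWin (n : ℕ) (i : Fin (n+1)) (M : ℕ) : Finset (Fin (n+1)) :=
  Finset.univ.filter fun j => (j : ℕ) < (i : ℕ) ∧ (i : ℕ) ≤ (j : ℕ) + M

variable {n : ℕ} {A B : Type} [Fintype A] [Fintype B] [DecidableEq A] [DecidableEq B]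

/-- Marginal of the joint pmf `μ` on the `A`-coordinates in `SA` and the
`B`-coordinates in `SB`, evaluated at `(a, b)`. -/
noncomputable def marg (μ : (Fin (n+1) → A) → (Fin (n+1) → B) → ℝ)
    (SA SB : Finset (Fin (n+1))) (a : Fin (n+1) → A) (b : Fin (n+1) → B) : ℝ :=
  ∑ a' : Fin (n+1) → A, ∑ b' : Fin (n+1) → B,
    if (∀ j ∈ SA, a' j = a j) ∧ (∀ j ∈ SB, b' j = b j) then μ a' b' else 0

/-- Marginal of `μ` on `B`-coordinates in `SB`. -/
noncomputable def margB (μ : (Fin (n+1) → A) → (Fin (n+1) → B) → ℝ)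
    (SB : Finset (Fin (n+1))) (b : Fin (n+1) → B) : ℝ :=
  ∑ a' : Fin (n+1) → A, ∑ b' : Fin (n+1) → B,
    if ∀ j ∈ SB, b' j = b j then μ a' b' else 0

/-- The induced conditional output pmf `Π_i(b_i | b^{i-1})`. -/
noncomputable def outCond (μ : (Fin (n+1) → A) → (Fin (n+1) → B) → ℝ)
    (i : Fin (n+1)) (b : Fin (n+1) → B) : ℝ :=
  margB μ (idxLe n i) b / margB μ (idxLt n i) b

/-- Conditional mutual information `I(A_{TA}; B_i | B_{SB})` under `μ`
(terms with zero joint probability vanish). -/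
noncomputable def cmi (μ : (Fin (n+1) → A) → (Fin (n+1) → B) → ℝ)
    (TA : Finset (Fin (n+1))) (i : Fin (n+1)) (SB : Finset (Fin (n+1))) : ℝ :=
  ∑ a : Fin (n+1) → A, ∑ b : Fin (n+1) → B,
    μ a b * Real.log (marg μ TA (insert i SB) a b * marg μ ∅ SB a b /
      (marg μ TA SB a b * marg μ ∅ (insert i SB) a b))

/-- Directed information `I(A^n → B^n) = ∑_i I(A^i; B_i | B^{i-1})`. -/
noncomputable def DI (μ : (Fin (n+1) → A) → (Fin (n+1) → B) → ℝ) : ℝ :=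
  ∑ i : Fin (n+1), cmi μ (idxLe n i) i (idxLt n i)

/-- A family of channel kernels `Q_i(b_i | b^{i-1}, a^i)`: nonnegative, summing to one
over `b_i`, and depending only on `(a^i, b^i)`. -/
def IsChannel (Q : Fin (n+1) → (Fin (n+1) → A) → (Fin (n+1) → B) → ℝ) : Prop :=
  (∀ i a b, 0 ≤ Q i a b) ∧
  (∀ i a b, ∑ x : B, Q i a (Function.update b i x) = 1) ∧
  (∀ (i : Fin (n+1)) (a a' : Fin (n+1) → A) (b b' : Fin (n+1) → B),
    (∀ j : Fin (n+1), (j:ℕ) ≤ (i:ℕ) → a j = a' j) →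
    (∀ j : Fin (n+1), (j:ℕ) ≤ (i:ℕ) → b j = b' j) → Q i a b = Q i a' b')

/-- A family of feedback input kernels `P_i(a_i | a^{i-1}, b^{i-1})`: nonnegative,
summing to one over `a_i`, and depending only on `(a^i, b^{i-1})`. -/
def IsInput (P : Fin (n+1) → (Fin (n+1) → A) → (Fin (n+1) → B) → ℝ) : Prop :=
  (∀ i a b, 0 ≤ P i a b) ∧
  (∀ i a b, ∑ x : A, P i (Function.update a i x) b = 1) ∧
  (∀ (i : Fin (n+1)) (a a' : Fin (n+1) → A) (b b' : Fin (n+1) → B),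
    (∀ j : Fin (n+1), (j:ℕ) ≤ (i:ℕ) → a j = a' j) →
    (∀ j : Fin (n+1), (j:ℕ) < (i:ℕ) → b j = b' j) → P i a b = P i a' b')

/-- The joint pmf induced by channel kernels `Q` and input kernels `P`. -/
noncomputable def joint (Q P : Fin (n+1) → (Fin (n+1) → A) → (Fin (n+1) → B) → ℝ)
    (a : Fin (n+1) → A) (b : Fin (n+1) → B) : ℝ :=
  ∏ i : Fin (n+1), Q i a b * P i a b


lemma sum_perm_coord {ι X : Type} [Fintype ι] [DecidableEq ι] [Fintype X] (e : ι → Equiv.Perm X)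
    (F : (ι → X) → ℝ) : ∑ g : ι → X, F (fun j => e j (g j)) = ∑ g : ι → X, F g :=
  Equiv.sum_comp (Equiv.piCongrRight e) F

lemma sum_swap_coordA {ι X : Type} [Fintype ι] [DecidableEq ι] [Fintype X] [DecidableEq X]
    (m : ι) (u v : X) (F : (ι → X) → ℝ) (hF : ∀ g x, F (Function.update g m x) = F g) :
    ∑ g : ι → X, (if g m = u then F g else 0) = ∑ g : ι → X, (if g m = v then F g else 0) := by
  have := sum_perm_coord (fun j => if j = m then Equiv.swap u v else Equiv.refl X)
    (fun g => if g m = u then F g else 0)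
  rw [← this]
  apply Finset.sum_congr rfl
  intro g _
  have h1 : (fun j => (if j = m then Equiv.swap u v else Equiv.refl X) (g j))
      = Function.update g m (Equiv.swap u v (g m)) := by
    funext j
    by_cases hj : j = m
    · subst hj; simp
    · simp [hj, Function.update_of_ne hj]
  rw [h1]
  simp only [Function.update_self, hF]
  congr 1
  have : Equiv.swap u v (g m) = u ↔ g m = v := by
    rw [Equiv.apply_eq_iff_eq_symm_apply]; simp
  exact propext this

lemma sum_swap_all {ι X : Type} [Fintype ι] [DecidableEq ι] [Fintype X] [DecidableEq X]
    (C : (ι → X) → Prop) [DecidablePred C] (b b' : ι → X)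
    (hC : ∀ g : ι → X, C (fun j => Equiv.swap (b j) (b' j) (g j)) ↔ C g) :
    True := trivial

lemma sum_pin_all_but {ι X : Type} [Fintype ι] [DecidableEq ι] [Fintype X] [DecidableEq X]
    (m : ι) (b : ι → X) (H : (ι → X) → ℝ)
    (D : ∀ g : ι → X, Decidable (∀ j, j ≠ m → g j = b j)) :
    ∑ g : ι → X, (@ite ℝ (∀ j, j ≠ m → g j = b j) (D g) (H g) 0)
      = ∑ y : X, H (Function.update b m y) := by
  have hinst : ∀ g : ι → X, (@ite ℝ (∀ j, j ≠ m → g j = b j) (D g) (H g) 0)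
      = (if ∀ j, j ≠ m → g j = b j then H g else 0) := by
    intro g
    rw [Subsingleton.elim (D g) Fintype.decidableForallFintype]
  rw [Finset.sum_congr rfl fun g _ => hinst g]
  have h1 : ∀ g : ι → X, (if ∀ j, j ≠ m → g j = b j then H g else 0)
      = ∑ y : X, if g = Function.update b m y then H g else 0 := by
    intro g
    by_cases hc : ∀ j, j ≠ m → g j = b j
    · rw [if_pos hc]
      have h2 : ∀ y : X, (g = Function.update b m y) ↔ y = g m := by
        intro y
        constructor
        · intro h; rw [h]; simp
        · intro h; subst h; funext j
          by_cases hj : j = m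
          · subst hj; simp
          · rw [Function.update_of_ne hj]; exact hc j hj
      simp only [h2]
      simp
    · rw [if_neg hc]
      symm
      apply Finset.sum_eq_zero
      intro y _
      rw [if_neg]
      intro h
      exact hc (fun j hj => by rw [h, Function.update_of_ne hj])
  rw [Finset.sum_congr rfl (fun g _ => h1 g), Finset.sum_comm]
  apply Finset.sum_congr rfl
  intro y _
  simp

lemma sum_split {ι X : Type} [Fintype ι] [DecidableEq ι] [Fintype X] [DecidableEq X]
    (m : ι) (x₀ : X) (F : (ι → X) → ℝ) :
    ∑ g : ι → X, F g
      = ∑ g : ι → X, (if g m = x₀ then ∑ v : X, F (Function.update g m v) else 0) := by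
  have h2 : ∀ v : X, ∑ g : ι → X, (if g m = x₀ then F (Function.update g m v) else 0)
      = ∑ g : ι → X, (if g m = v then F g else 0) := by
    intro v
    rw [sum_swap_coordA m x₀ v (fun g => F (Function.update g m v))
      (by intro g x; show F (Function.update (Function.update g m x) m v) = F (Function.update g m v); rw [Function.update_idem])]
    apply Finset.sum_congr rfl
    intro g _
    by_cases h : g m = v
    · rw [if_pos h, if_pos h]
      congr 1
      rw [← h]
      exact Function.update_eq_self m g
    · rw [if_neg h, if_neg h]
  calc ∑ g : ι → X, F g = ∑ g : ι → X, ∑ v : X, (if g m = v then F g else 0) := by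
        apply Finset.sum_congr rfl; intro g _; simp
    _ = ∑ v : X, ∑ g : ι → X, (if g m = v then F g else 0) := Finset.sum_comm
    _ = ∑ v : X, ∑ g : ι → X, (if g m = x₀ then F (Function.update g m v) else 0) := by
        exact Finset.sum_congr rfl fun v _ => (h2 v).symm
    _ = ∑ g : ι → X, (if g m = x₀ then ∑ v : X, F (Function.update g m v) else 0) := by
        rw [Finset.sum_comm]
        apply Finset.sum_congr rfl
        intro g _
        by_cases h : g m = x₀ <;> simp [h]

lemma collapse (Q P : Fin (n+1) → (Fin (n+1) → A) → (Fin (n+1) → B) → ℝ)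
    (hQ : IsChannel Q) (hP : IsInput P) (m : Fin (n+1))
    (g : (Fin (n+1) → A) → (Fin (n+1) → B) → ℝ)
    (hg : ∀ a b x y, g (Function.update a m x) (Function.update b m y) = g a b)
    (a0 : Fin (n+1) → A) (b0 : Fin (n+1) → B) :
    ∑ a : Fin (n+1) → A, ∑ b : Fin (n+1) → B, g a b * (Q m a b * P m a b)
      = ∑ a : Fin (n+1) → A, ∑ b : Fin (n+1) → B,
          (if a m = a0 m ∧ b m = b0 m then g a b else 0) := by
  have norm1 : ∀ (a : Fin (n+1) → A) (b : Fin (n+1) → B),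
      (∑ x : A, ∑ y : B, Q m (Function.update a m x) (Function.update b m y) *
        P m (Function.update a m x) (Function.update b m y)) = 1 := by
    intro a b
    have hPy : ∀ (x : A) (y : B), P m (Function.update a m x) (Function.update b m y)
        = P m (Function.update a m x) b := by
      intro x y
      refine hP.2.2 m _ _ _ _ (fun j _ => rfl) (fun j hj => ?_)
      refine Function.update_of_ne (fun h => ?_) _ _
      rw [h] at hj; simp at hj
    calc (∑ x : A, ∑ y : B, Q m (Function.update a m x) (Function.update b m y) *
          P m (Function.update a m x) (Function.update b m y))
        = ∑ x : A, (∑ y : B, Q m (Function.update a m x) (Function.update b m y)) *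
            P m (Function.update a m x) b := by
          apply Finset.sum_congr rfl; intro x _
          rw [Finset.sum_mul]
          exact Finset.sum_congr rfl fun y _ => by rw [hPy x y]
      _ = ∑ x : A, P m (Function.update a m x) b := by
          apply Finset.sum_congr rfl; intro x _
          rw [hQ.2.1 m _ b, one_mul]
      _ = 1 := hP.2.1 m a b
  rw [sum_split m (a0 m) (fun a => ∑ b : Fin (n+1) → B, g a b * (Q m a b * P m a b))]
  apply Finset.sum_congr rfl
  intro a _
  by_cases ha : a m = a0 m
  · rw [if_pos ha]
    have step1 : ∀ x : A,
        (∑ b : Fin (n+1) → B, g (Function.update a m x) b *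
          (Q m (Function.update a m x) b * P m (Function.update a m x) b))
        = ∑ b : Fin (n+1) → B, (if b m = b0 m then
            ∑ y : B, g a b * (Q m (Function.update a m x) (Function.update b m y) *
              P m (Function.update a m x) (Function.update b m y)) else 0) := by
      intro x
      rw [sum_split m (b0 m) (fun b => g (Function.update a m x) b *
        (Q m (Function.update a m x) b * P m (Function.update a m x) b))]
      apply Finset.sum_congr rfl
      intro b _
      by_cases hb : b m = b0 m
      · rw [if_pos hb, if_pos hb]
        apply Finset.sum_congr rfl
        intro y _
        rw [hg a b x y]
      · rw [if_neg hb, if_neg hb]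
    calc (∑ x : A, ∑ b : Fin (n+1) → B, g (Function.update a m x) b *
            (Q m (Function.update a m x) b * P m (Function.update a m x) b))
        = ∑ x : A, ∑ b : Fin (n+1) → B, (if b m = b0 m then
            ∑ y : B, g a b * (Q m (Function.update a m x) (Function.update b m y) *
              P m (Function.update a m x) (Function.update b m y)) else 0) :=
          Finset.sum_congr rfl fun x _ => step1 x
      _ = ∑ b : Fin (n+1) → B, (if b m = b0 m then
            ∑ x : A, ∑ y : B, g a b * (Q m (Function.update a m x) (Function.update b m y) *
              P m (Function.update a m x) (Function.update b m y)) else 0) := by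
          rw [Finset.sum_comm]
          apply Finset.sum_congr rfl
          intro b _
          by_cases hb : b m = b0 m <;> simp [hb]
      _ = ∑ b : Fin (n+1) → B, (if b m = b0 m then g a b else 0) := by
          apply Finset.sum_congr rfl
          intro b _
          by_cases hb : b m = b0 m
          · rw [if_pos hb, if_pos hb]
            simp only [← Finset.mul_sum]
            rw [norm1 a b, mul_one]
          · rw [if_neg hb, if_neg hb]
      _ = ∑ b : Fin (n+1) → B, (if a m = a0 m ∧ b m = b0 m then g a b else 0) := by
          apply Finset.sum_congr rfl
          intro b _
          by_cases hb : b m = b0 m <;> simp [ha, hb]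
  · rw [if_neg ha]
    symm
    apply Finset.sum_eq_zero
    intro b _
    rw [if_neg]
    rintro ⟨h1, _⟩
    exact ha h1

lemma sumout (Q P : Fin (n+1) → (Fin (n+1) → A) → (Fin (n+1) → B) → ℝ)
    (hQ : IsChannel Q) (hP : IsInput P) :
    ∀ (d m : ℕ), m + d = n + 1 →
      ∀ g : (Fin (n+1) → A) → (Fin (n+1) → B) → ℝ,
      (∀ (a a' : Fin (n+1) → A) (b b' : Fin (n+1) → B),
        (∀ j : Fin (n+1), (j:ℕ) < m → a j = a' j) →
        (∀ j : Fin (n+1), (j:ℕ) < m → b j = b' j) → g a b = g a' b') →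
      ∀ (a0 : Fin (n+1) → A) (b0 : Fin (n+1) → B),
      (∑ a : Fin (n+1) → A, ∑ b : Fin (n+1) → B,
          g a b * ∏ j ∈ Finset.univ.filter (fun j : Fin (n+1) => m ≤ (j:ℕ)), (Q j a b * P j a b))
        = ∑ a : Fin (n+1) → A, ∑ b : Fin (n+1) → B,
            (if (∀ j : Fin (n+1), m ≤ (j:ℕ) → a j = a0 j) ∧
                (∀ j : Fin (n+1), m ≤ (j:ℕ) → b j = b0 j)
              then g a b else 0) := by
  intro d
  induction d with
  | zero =>
    intro m hm g hg a0 b0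
    have hfil : (Finset.univ.filter (fun j : Fin (n+1) => m ≤ (j:ℕ))) = ∅ := by
      apply Finset.eq_empty_of_forall_notMem
      intro j hj
      rw [Finset.mem_filter] at hj
      have := j.isLt
      omega
    rw [hfil]
    apply Finset.sum_congr rfl; intro a _
    apply Finset.sum_congr rfl; intro b _
    rw [Finset.prod_empty, mul_one, if_pos]
    constructor <;> exact fun j hj => absurd hj (by have := j.isLt; omega)
  | succ d ih =>
    intro m hm g hg a0 b0
    have hmn : m ≤ n := by omega
    obtain ⟨mf, hmv⟩ : ∃ mf : Fin (n+1), (mf : ℕ) = m := ⟨⟨m, by omega⟩, rfl⟩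
    have hins : Finset.univ.filter (fun j : Fin (n+1) => m ≤ (j:ℕ))
        = insert mf (Finset.univ.filter (fun j : Fin (n+1) => m + 1 ≤ (j:ℕ))) := by
      ext j
      simp only [Finset.mem_filter, Finset.mem_univ, true_and, Finset.mem_insert, Fin.ext_iff]
      constructor
      · intro h
        rcases Nat.eq_or_lt_of_le h with h' | h'
        · left; omega
        · right; omega
      · rintro (h | h) <;> omega
    have hnot : mf ∉ Finset.univ.filter (fun j : Fin (n+1) => m + 1 ≤ (j:ℕ)) := by
      simp only [Finset.mem_filter, Finset.mem_univ, true_and]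
      omega
    have hg' : ∀ (a a' : Fin (n+1) → A) (b b' : Fin (n+1) → B),
        (∀ j : Fin (n+1), (j:ℕ) < m + 1 → a j = a' j) →
        (∀ j : Fin (n+1), (j:ℕ) < m + 1 → b j = b' j) →
        g a b * (Q mf a b * P mf a b) = g a' b' * (Q mf a' b' * P mf a' b') := by
      intro a a' b b' haa hbb
      rw [hg a a' b b' (fun j hj => haa j (by omega)) (fun j hj => hbb j (by omega)),
        hQ.2.2 mf a a' b b' (fun j hj => haa j (by omega)) (fun j hj => hbb j (by omega)),
        hP.2.2 mf a a' b b' (fun j hj => haa j (by omega)) (fun j hj => hbb j (by omega))]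
    have key := ih (m+1) (by omega) (fun a b => g a b * (Q mf a b * P mf a b)) hg' a0 b0
    calc (∑ a : Fin (n+1) → A, ∑ b : Fin (n+1) → B,
            g a b * ∏ j ∈ Finset.univ.filter (fun j : Fin (n+1) => m ≤ (j:ℕ)), (Q j a b * P j a b))
        = ∑ a : Fin (n+1) → A, ∑ b : Fin (n+1) → B,
            (g a b * (Q mf a b * P mf a b)) *
              ∏ j ∈ Finset.univ.filter (fun j : Fin (n+1) => m + 1 ≤ (j:ℕ)), (Q j a b * P j a b) := by
          apply Finset.sum_congr rfl; intro a _
          apply Finset.sum_congr rfl; intro b _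
          rw [hins, Finset.prod_insert hnot, ← mul_assoc]
      _ = ∑ a : Fin (n+1) → A, ∑ b : Fin (n+1) → B,
            (if (∀ j : Fin (n+1), m + 1 ≤ (j:ℕ) → a j = a0 j) ∧
                (∀ j : Fin (n+1), m + 1 ≤ (j:ℕ) → b j = b0 j)
              then g a b * (Q mf a b * P mf a b) else 0) := key
      _ = ∑ a : Fin (n+1) → A, ∑ b : Fin (n+1) → B,
            (if (∀ j : Fin (n+1), m + 1 ≤ (j:ℕ) → a j = a0 j) ∧
                (∀ j : Fin (n+1), m + 1 ≤ (j:ℕ) → b j = b0 j)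
              then g a b else 0) * (Q mf a b * P mf a b) := by
          apply Finset.sum_congr rfl; intro a _
          apply Finset.sum_congr rfl; intro b _
          by_cases h : (∀ j : Fin (n+1), m + 1 ≤ (j:ℕ) → a j = a0 j) ∧
              (∀ j : Fin (n+1), m + 1 ≤ (j:ℕ) → b j = b0 j)
          · rw [if_pos h, if_pos h]
          · rw [if_neg h, if_neg h, zero_mul]
      _ = ∑ a : Fin (n+1) → A, ∑ b : Fin (n+1) → B,
            (if a mf = a0 mf ∧ b mf = b0 mf then
              (if (∀ j : Fin (n+1), m + 1 ≤ (j:ℕ) → a j = a0 j) ∧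
                  (∀ j : Fin (n+1), m + 1 ≤ (j:ℕ) → b j = b0 j)
                then g a b else 0) else 0) := by
          apply collapse Q P hQ hP mf _ _ a0 b0
          intro a b x y
          have hja : ∀ j : Fin (n+1), m + 1 ≤ (j:ℕ) → Function.update a mf x j = a j := by
            intro j hj
            exact Function.update_of_ne (by intro h; rw [h] at hj; rw [hmv] at hj; omega) _ _
          have hjb : ∀ j : Fin (n+1), m + 1 ≤ (j:ℕ) → Function.update b mf y j = b j := by
            intro j hj
            exact Function.update_of_ne (by intro h; rw [h] at hj; rw [hmv] at hj; omega) _ _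
          have hcond : ((∀ j : Fin (n+1), m + 1 ≤ (j:ℕ) → Function.update a mf x j = a0 j) ∧
              (∀ j : Fin (n+1), m + 1 ≤ (j:ℕ) → Function.update b mf y j = b0 j))
              ↔ ((∀ j : Fin (n+1), m + 1 ≤ (j:ℕ) → a j = a0 j) ∧
                (∀ j : Fin (n+1), m + 1 ≤ (j:ℕ) → b j = b0 j)) := by
            constructor
            · rintro ⟨h1, h2⟩
              exact ⟨fun j hj => (hja j hj).symm.trans (h1 j hj),
                fun j hj => (hjb j hj).symm.trans (h2 j hj)⟩
            · rintro ⟨h1, h2⟩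
              exact ⟨fun j hj => (hja j hj).trans (h1 j hj),
                fun j hj => (hjb j hj).trans (h2 j hj)⟩
          have hgv : g (Function.update a mf x) (Function.update b mf y) = g a b :=
            hg _ _ _ _ (fun j hj => Function.update_of_ne (by intro h; rw [h] at hj; rw [hmv] at hj; omega) _ _)
              (fun j hj => Function.update_of_ne (by intro h; rw [h] at hj; rw [hmv] at hj; omega) _ _)
          exact if_congr hcond hgv rfl
      _ = ∑ a : Fin (n+1) → A, ∑ b : Fin (n+1) → B,
            (if (∀ j : Fin (n+1), m ≤ (j:ℕ) → a j = a0 j) ∧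
                (∀ j : Fin (n+1), m ≤ (j:ℕ) → b j = b0 j)
              then g a b else 0) := by
          apply Finset.sum_congr rfl; intro a _
          apply Finset.sum_congr rfl; intro b _
          by_cases hp : a mf = a0 mf ∧ b mf = b0 mf
          · rw [if_pos hp]
            apply if_congr _ rfl rfl
            constructor
            · rintro ⟨h1, h2⟩
              constructor <;> intro j hj
              · rcases Nat.eq_or_lt_of_le hj with h' | h'
                · have hjm : j = mf := Fin.ext (by omega)
                  rw [hjm]; exact hp.1
                · exact h1 j (by omega)
              · rcases Nat.eq_or_lt_of_le hj with h' | h'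
                · have hjm : j = mf := Fin.ext (by omega)
                  rw [hjm]; exact hp.2
                · exact h2 j (by omega)
            · rintro ⟨h1, h2⟩
              exact ⟨fun j hj => h1 j (by omega), fun j hj => h2 j (by omega)⟩
          · rw [if_neg hp, if_neg]
            rintro ⟨h1, h2⟩
            exact hp ⟨h1 mf (by omega), h2 mf (by omega)⟩

lemma mem_idxLe {i j : Fin (n+1)} : j ∈ idxLe n i ↔ (j:ℕ) ≤ (i:ℕ) := by simp [idxLe]

lemma mem_idxLt {i j : Fin (n+1)} : j ∈ idxLt n i ↔ (j:ℕ) < (i:ℕ) := by simp [idxLt]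

lemma insert_idxLt (i : Fin (n+1)) : insert i (idxLt n i) = idxLe n i := by
  ext j
  simp only [Finset.mem_insert, mem_idxLt, mem_idxLe, Fin.ext_iff]
  omega

lemma marg_empty_eq_margB (μ : (Fin (n+1) → A) → (Fin (n+1) → B) → ℝ)
    (SB : Finset (Fin (n+1))) (a : Fin (n+1) → A) (b : Fin (n+1) → B) :
    marg μ ∅ SB a b = margB μ SB b := by
  simp [marg, margB]

lemma marg_nonneg {μ : (Fin (n+1) → A) → (Fin (n+1) → B) → ℝ} (hμ : ∀ a b, 0 ≤ μ a b)
    (SA SB : Finset (Fin (n+1))) (a : Fin (n+1) → A) (b : Fin (n+1) → B) :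
    0 ≤ marg μ SA SB a b := by
  apply Finset.sum_nonneg; intro a' _
  apply Finset.sum_nonneg; intro b' _
  split
  · exact hμ _ _
  · exact le_rfl

lemma margB_nonneg {μ : (Fin (n+1) → A) → (Fin (n+1) → B) → ℝ} (hμ : ∀ a b, 0 ≤ μ a b)
    (SB : Finset (Fin (n+1))) (b : Fin (n+1) → B) : 0 ≤ margB μ SB b := by
  apply Finset.sum_nonneg; intro a' _
  apply Finset.sum_nonneg; intro b' _
  split
  · exact hμ _ _
  · exact le_rfl

lemma le_marg {μ : (Fin (n+1) → A) → (Fin (n+1) → B) → ℝ} (hμ : ∀ a b, 0 ≤ μ a b)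
    (SA SB : Finset (Fin (n+1))) (a : Fin (n+1) → A) (b : Fin (n+1) → B) :
    μ a b ≤ marg μ SA SB a b := by
  have h1 : μ a b = (fun b' => if (∀ j ∈ SA, a j = a j) ∧ (∀ j ∈ SB, b' j = b j) then μ a b' else 0) b := by
    simp
  unfold marg
  calc μ a b ≤ ∑ b' : Fin (n+1) → B, (if (∀ j ∈ SA, a j = a j) ∧ (∀ j ∈ SB, b' j = b j) then μ a b' else 0) := by
        rw [h1]
        apply Finset.single_le_sum (f := fun b' => if (∀ j ∈ SA, a j = a j) ∧ (∀ j ∈ SB, b' j = b j) then μ a b' else 0)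
          (fun b' _ => by split; exacts [hμ _ _, le_rfl]) (Finset.mem_univ b)
    _ ≤ ∑ a' : Fin (n+1) → A, ∑ b' : Fin (n+1) → B, (if (∀ j ∈ SA, a' j = a j) ∧ (∀ j ∈ SB, b' j = b j) then μ a' b' else 0) := by
        apply Finset.single_le_sum (f := fun a' => ∑ b' : Fin (n+1) → B, (if (∀ j ∈ SA, a' j = a j) ∧ (∀ j ∈ SB, b' j = b j) then μ a' b' else 0))
          (fun a' _ => Finset.sum_nonneg fun b' _ => by split; exacts [hμ _ _, le_rfl]) (Finset.mem_univ a)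

lemma marg_le_margB {μ : (Fin (n+1) → A) → (Fin (n+1) → B) → ℝ} (hμ : ∀ a b, 0 ≤ μ a b)
    (SA SB : Finset (Fin (n+1))) (a : Fin (n+1) → A) (b : Fin (n+1) → B) :
    marg μ SA SB a b ≤ margB μ SB b := by
  apply Finset.sum_le_sum; intro a' _
  apply Finset.sum_le_sum; intro b' _
  by_cases h : (∀ j ∈ SA, a' j = a j) ∧ (∀ j ∈ SB, b' j = b j)
  · rw [if_pos h, if_pos h.2]
  · rw [if_neg h]
    split
    · exact hμ _ _
    · exact le_rfl

lemma marg_dep {μ : (Fin (n+1) → A) → (Fin (n+1) → B) → ℝ} {SA SB : Finset (Fin (n+1))}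
    {a a' : Fin (n+1) → A} {b b' : Fin (n+1) → B}
    (ha : ∀ j ∈ SA, a j = a' j) (hb : ∀ j ∈ SB, b j = b' j) :
    marg μ SA SB a b = marg μ SA SB a' b' := by
  unfold marg
  apply Finset.sum_congr rfl; intro x _
  apply Finset.sum_congr rfl; intro y _
  apply if_congr _ rfl rfl
  constructor
  · rintro ⟨h1, h2⟩
    exact ⟨fun j hj => (h1 j hj).trans (ha j hj), fun j hj => (h2 j hj).trans (hb j hj)⟩
  · rintro ⟨h1, h2⟩
    exact ⟨fun j hj => (h1 j hj).trans (ha j hj).symm, fun j hj => (h2 j hj).trans (hb j hj).symm⟩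

lemma margB_dep {μ : (Fin (n+1) → A) → (Fin (n+1) → B) → ℝ} {SB : Finset (Fin (n+1))}
    {b b' : Fin (n+1) → B} (hb : ∀ j ∈ SB, b j = b' j) :
    margB μ SB b = margB μ SB b' := by
  unfold margB
  apply Finset.sum_congr rfl; intro x _
  apply Finset.sum_congr rfl; intro y _
  apply if_congr _ rfl rfl
  constructor
  · intro h1
    exact fun j hj => (h1 j hj).trans (hb j hj)
  · intro h1
    exact fun j hj => (h1 j hj).trans (hb j hj).symm

lemma margB_eq_sum_marg (μ : (Fin (n+1) → A) → (Fin (n+1) → B) → ℝ)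
    (SB : Finset (Fin (n+1))) (i : Fin (n+1)) (a : Fin (n+1) → A) (b : Fin (n+1) → B) :
    margB μ SB b = ∑ x : A, marg μ {i} SB (Function.update a i x) b := by
  unfold marg margB
  rw [Finset.sum_comm (γ := A)]
  apply Finset.sum_congr rfl; intro a' _
  rw [Finset.sum_comm (γ := A)]
  apply Finset.sum_congr rfl; intro b' _
  by_cases h : ∀ j ∈ SB, b' j = b j
  · rw [if_pos h]
    have : ∀ x : A, (if (∀ j ∈ ({i} : Finset (Fin (n+1))), a' j = Function.update a i x j) ∧ (∀ j ∈ SB, b' j = b j) then μ a' b' else 0)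
        = if a' i = x then μ a' b' else 0 := by
      intro x
      apply if_congr _ rfl rfl
      constructor
      · rintro ⟨h1, _⟩
        have h2 := h1 i (Finset.mem_singleton_self i)
        rwa [Function.update_self] at h2
      · intro hx
        refine ⟨fun j hj => ?_, h⟩
        rw [Finset.mem_singleton] at hj
        subst hj
        rw [Function.update_self]
        exact hx
    rw [Finset.sum_congr rfl fun x _ => this x]
    simp
  · rw [if_neg h]
    symm
    apply Finset.sum_eq_zero
    intro x _
    rw [if_neg]
    rintro ⟨_, h2⟩
    exact h h2

lemma joint_nonneg {Q P : Fin (n+1) → (Fin (n+1) → A) → (Fin (n+1) → B) → ℝ}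
    (hQ0 : ∀ i a b, 0 ≤ Q i a b) (hP0 : ∀ i a b, 0 ≤ P i a b)
    (a : Fin (n+1) → A) (b : Fin (n+1) → B) : 0 ≤ joint Q P a b :=
  Finset.prod_nonneg fun i _ => mul_nonneg (hQ0 i a b) (hP0 i a b)

lemma joint_split (Q P : Fin (n+1) → (Fin (n+1) → A) → (Fin (n+1) → B) → ℝ) (m : ℕ)
    (a : Fin (n+1) → A) (b : Fin (n+1) → B) :
    joint Q P a b = (∏ j ∈ Finset.univ.filter (fun j : Fin (n+1) => (j:ℕ) < m), (Q j a b * P j a b))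
      * ∏ j ∈ Finset.univ.filter (fun j : Fin (n+1) => m ≤ (j:ℕ)), (Q j a b * P j a b) := by
  unfold joint
  rw [← Finset.prod_filter_mul_prod_filter_not Finset.univ (fun j : Fin (n+1) => (j:ℕ) < m)]
  congr 1
  apply Finset.prod_congr _ (fun _ _ => rfl)
  apply Finset.filter_congr
  intro j _
  simp [not_lt]

lemma marg_form (Q P : Fin (n+1) → (Fin (n+1) → A) → (Fin (n+1) → B) → ℝ)
    (hQ : IsChannel Q) (hP : IsInput P) (i : Fin (n+1))
    (TA SB : Finset (Fin (n+1))) (hTA : ∀ j ∈ TA, (j:ℕ) ≤ (i:ℕ)) (hSB : ∀ j ∈ SB, (j:ℕ) ≤ (i:ℕ))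
    (a : Fin (n+1) → A) (b : Fin (n+1) → B) :
    marg (joint Q P) TA SB a b
      = ∑ a' : Fin (n+1) → A, ∑ b' : Fin (n+1) → B,
          (if ((∀ j ∈ TA, a' j = a j) ∧ (∀ j ∈ SB, b' j = b j)) ∧
              ((∀ j : Fin (n+1), (i:ℕ)+1 ≤ (j:ℕ) → a' j = a j) ∧
                (∀ j : Fin (n+1), (i:ℕ)+1 ≤ (j:ℕ) → b' j = b j))
            then ∏ j ∈ Finset.univ.filter (fun j : Fin (n+1) => (j:ℕ) < (i:ℕ)+1),
              (Q j a' b' * P j a' b')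
            else 0) := by
  have hdep : ∀ (a1 a2 : Fin (n+1) → A) (b1 b2 : Fin (n+1) → B),
      (∀ j : Fin (n+1), (j:ℕ) < (i:ℕ)+1 → a1 j = a2 j) →
      (∀ j : Fin (n+1), (j:ℕ) < (i:ℕ)+1 → b1 j = b2 j) →
      (if (∀ j ∈ TA, a1 j = a j) ∧ (∀ j ∈ SB, b1 j = b j)
        then ∏ j ∈ Finset.univ.filter (fun j : Fin (n+1) => (j:ℕ) < (i:ℕ)+1), (Q j a1 b1 * P j a1 b1)
        else 0)
      = (if (∀ j ∈ TA, a2 j = a j) ∧ (∀ j ∈ SB, b2 j = b j)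
        then ∏ j ∈ Finset.univ.filter (fun j : Fin (n+1) => (j:ℕ) < (i:ℕ)+1), (Q j a2 b2 * P j a2 b2)
        else 0) := by
    intro a1 a2 b1 b2 h1 h2
    apply if_congr
    · constructor
      · rintro ⟨c1, c2⟩
        exact ⟨fun j hj => (h1 j (by have := hTA j hj; omega)).symm.trans (c1 j hj),
          fun j hj => (h2 j (by have := hSB j hj; omega)).symm.trans (c2 j hj)⟩
      · rintro ⟨c1, c2⟩
        exact ⟨fun j hj => (h1 j (by have := hTA j hj; omega)).trans (c1 j hj),
          fun j hj => (h2 j (by have := hSB j hj; omega)).trans (c2 j hj)⟩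
    · apply Finset.prod_congr rfl
      intro j hj
      rw [Finset.mem_filter] at hj
      rw [hQ.2.2 j a1 a2 b1 b2 (fun j' hj' => h1 j' (by omega)) (fun j' hj' => h2 j' (by omega)),
        hP.2.2 j a1 a2 b1 b2 (fun j' hj' => h1 j' (by omega)) (fun j' hj' => h2 j' (by omega))]
    · rfl
  have hi : (i:ℕ) + 1 + (n - (i:ℕ)) = n + 1 := by have := i.isLt; omega
  have hs := sumout Q P hQ hP (n - (i:ℕ)) ((i:ℕ)+1) hi
      (fun a' b' => if (∀ j ∈ TA, a' j = a j) ∧ (∀ j ∈ SB, b' j = b j)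
        then ∏ j ∈ Finset.univ.filter (fun j : Fin (n+1) => (j:ℕ) < (i:ℕ)+1), (Q j a' b' * P j a' b')
        else 0)
      hdep a b
  calc marg (joint Q P) TA SB a b
      = ∑ a' : Fin (n+1) → A, ∑ b' : Fin (n+1) → B,
          ((if (∀ j ∈ TA, a' j = a j) ∧ (∀ j ∈ SB, b' j = b j)
            then ∏ j ∈ Finset.univ.filter (fun j : Fin (n+1) => (j:ℕ) < (i:ℕ)+1), (Q j a' b' * P j a' b')
            else 0)
            * ∏ j ∈ Finset.univ.filter (fun j : Fin (n+1) => (i:ℕ)+1 ≤ (j:ℕ)), (Q j a' b' * P j a' b')) := by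
        unfold marg
        apply Finset.sum_congr rfl; intro a' _
        apply Finset.sum_congr rfl; intro b' _
        by_cases h : (∀ j ∈ TA, a' j = a j) ∧ (∀ j ∈ SB, b' j = b j)
        · rw [if_pos h, if_pos h, joint_split Q P ((i:ℕ)+1)]
        · rw [if_neg h, if_neg h, zero_mul]
    _ = ∑ a' : Fin (n+1) → A, ∑ b' : Fin (n+1) → B,
          (if (∀ j : Fin (n+1), (i:ℕ)+1 ≤ (j:ℕ) → a' j = a j) ∧
              (∀ j : Fin (n+1), (i:ℕ)+1 ≤ (j:ℕ) → b' j = b j)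
            then (if (∀ j ∈ TA, a' j = a j) ∧ (∀ j ∈ SB, b' j = b j)
              then ∏ j ∈ Finset.univ.filter (fun j : Fin (n+1) => (j:ℕ) < (i:ℕ)+1), (Q j a' b' * P j a' b')
              else 0)
            else 0) := hs
    _ = _ := by
        apply Finset.sum_congr rfl; intro a' _
        apply Finset.sum_congr rfl; intro b' _
        by_cases h1 : (∀ j : Fin (n+1), (i:ℕ)+1 ≤ (j:ℕ) → a' j = a j) ∧
            (∀ j : Fin (n+1), (i:ℕ)+1 ≤ (j:ℕ) → b' j = b j)
        · rw [if_pos h1]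
          by_cases h2 : (∀ j ∈ TA, a' j = a j) ∧ (∀ j ∈ SB, b' j = b j)
          · rw [if_pos h2, if_pos ⟨h2, h1⟩]
          · rw [if_neg h2, if_neg (fun hc => h2 hc.1)]
        · rw [if_neg h1, if_neg (fun hc => h1 hc.2)]

set_option maxHeartbeats 2000000 in
lemma key (Q P : Fin (n+1) → (Fin (n+1) → A) → (Fin (n+1) → B) → ℝ)
    (hQ : IsChannel Q) (hP : IsInput P)
    (hQA : ∀ (i : Fin (n+1)) (a a' : Fin (n+1) → A) (b b' : Fin (n+1) → B),
      a i = a' i → (∀ j : Fin (n+1), (j:ℕ) ≤ (i:ℕ) → b j = b' j) → Q i a b = Q i a' b')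
    (i : Fin (n+1)) (TA : Finset (Fin (n+1))) (hiTA : i ∈ TA) (hTA : ∀ j ∈ TA, (j:ℕ) ≤ (i:ℕ))
    (a : Fin (n+1) → A) (b : Fin (n+1) → B) :
    marg (joint Q P) TA (idxLe n i) a b = Q i a b * marg (joint Q P) TA (idxLt n i) a b := by
  have hSBle : ∀ j ∈ idxLe n i, (j:ℕ) ≤ (i:ℕ) := fun j hj => mem_idxLe.mp hj
  have hSBlt : ∀ j ∈ idxLt n i, (j:ℕ) ≤ (i:ℕ) := fun j hj => le_of_lt (mem_idxLt.mp hj)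
  have hins2 : Finset.univ.filter (fun j : Fin (n+1) => (j:ℕ) < (i:ℕ)+1)
      = insert i (Finset.univ.filter (fun j : Fin (n+1) => (j:ℕ) < (i:ℕ))) := by
    ext j
    simp only [Finset.mem_filter, Finset.mem_univ, true_and, Finset.mem_insert, Fin.ext_iff]
    omega
  have hnoti : i ∉ Finset.univ.filter (fun j : Fin (n+1) => (j:ℕ) < (i:ℕ)) := by
    simp
  -- low product invariance under changing b at coordinate i
  have hGlowLow : ∀ (a' : Fin (n+1) → A) (b1 b2 : Fin (n+1) → B),
      (∀ j : Fin (n+1), (j:ℕ) < (i:ℕ) → b1 j = b2 j) →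
      (∏ j ∈ Finset.univ.filter (fun j : Fin (n+1) => (j:ℕ) < (i:ℕ)), (Q j a' b1 * P j a' b1))
      = ∏ j ∈ Finset.univ.filter (fun j : Fin (n+1) => (j:ℕ) < (i:ℕ)), (Q j a' b2 * P j a' b2) := by
    intro a' b1 b2 hb
    apply Finset.prod_congr rfl
    intro j hj
    rw [Finset.mem_filter] at hj
    rw [hQ.2.2 j a' a' b1 b2 (fun _ _ => rfl) (fun j' hj' => hb j' (by omega)),
      hP.2.2 j a' a' b1 b2 (fun _ _ => rfl) (fun j' hj' => hb j' (by omega))]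
  rw [marg_form Q P hQ hP i TA _ hTA hSBle a b, marg_form Q P hQ hP i TA _ hTA hSBlt a b]
  have hDA : ∀ a' : Fin (n+1) → A, Decidable ((∀ j ∈ TA, a' j = a j) ∧
      (∀ j : Fin (n+1), (i:ℕ)+1 ≤ (j:ℕ) → a' j = a j)) := fun a' => inferInstance
  have hle : (∑ a' : Fin (n+1) → A, ∑ b' : Fin (n+1) → B,
        (if ((∀ j ∈ TA, a' j = a j) ∧ (∀ j ∈ idxLe n i, b' j = b j)) ∧
            ((∀ j : Fin (n+1), (i:ℕ)+1 ≤ (j:ℕ) → a' j = a j) ∧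
              (∀ j : Fin (n+1), (i:ℕ)+1 ≤ (j:ℕ) → b' j = b j))
          then ∏ j ∈ Finset.univ.filter (fun j : Fin (n+1) => (j:ℕ) < (i:ℕ)+1), (Q j a' b' * P j a' b')
          else 0))
      = ∑ a' : Fin (n+1) → A,
          (if (∀ j ∈ TA, a' j = a j) ∧ (∀ j : Fin (n+1), (i:ℕ)+1 ≤ (j:ℕ) → a' j = a j)
            then Q i a b * ((∏ j ∈ Finset.univ.filter (fun j : Fin (n+1) => (j:ℕ) < (i:ℕ)),
              (Q j a' b * P j a' b)) * P i a' b)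
            else 0) := by
    apply Finset.sum_congr rfl; intro a' _
    by_cases hD : (∀ j ∈ TA, a' j = a j) ∧ (∀ j : Fin (n+1), (i:ℕ)+1 ≤ (j:ℕ) → a' j = a j)
    · rw [if_pos hD]
      have hbeq : ∀ b' : Fin (n+1) → B,
          (((∀ j ∈ TA, a' j = a j) ∧ (∀ j ∈ idxLe n i, b' j = b j)) ∧
            ((∀ j : Fin (n+1), (i:ℕ)+1 ≤ (j:ℕ) → a' j = a j) ∧
              (∀ j : Fin (n+1), (i:ℕ)+1 ≤ (j:ℕ) → b' j = b j))) ↔ b' = b := by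
        intro b'
        constructor
        · rintro ⟨⟨_, c2⟩, ⟨_, c4⟩⟩
          funext j
          by_cases hj : (j:ℕ) ≤ (i:ℕ)
          · exact c2 j (mem_idxLe.mpr hj)
          · exact c4 j (by omega)
        · intro hb'
          subst hb'
          exact ⟨⟨hD.1, fun _ _ => rfl⟩, ⟨hD.2, fun _ _ => rfl⟩⟩
      calc (∑ b' : Fin (n+1) → B,
            (if ((∀ j ∈ TA, a' j = a j) ∧ (∀ j ∈ idxLe n i, b' j = b j)) ∧
                ((∀ j : Fin (n+1), (i:ℕ)+1 ≤ (j:ℕ) → a' j = a j) ∧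
                  (∀ j : Fin (n+1), (i:ℕ)+1 ≤ (j:ℕ) → b' j = b j))
              then ∏ j ∈ Finset.univ.filter (fun j : Fin (n+1) => (j:ℕ) < (i:ℕ)+1), (Q j a' b' * P j a' b')
              else 0))
          = ∑ b' : Fin (n+1) → B, (if b' = b
              then ∏ j ∈ Finset.univ.filter (fun j : Fin (n+1) => (j:ℕ) < (i:ℕ)+1), (Q j a' b' * P j a' b')
              else 0) :=
            Finset.sum_congr rfl fun b' _ => if_congr (hbeq b') rfl rfl
        _ = ∏ j ∈ Finset.univ.filter (fun j : Fin (n+1) => (j:ℕ) < (i:ℕ)+1), (Q j a' b * P j a' b) := by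
            simp
        _ = Q i a b * ((∏ j ∈ Finset.univ.filter (fun j : Fin (n+1) => (j:ℕ) < (i:ℕ)),
              (Q j a' b * P j a' b)) * P i a' b) := by
            rw [hins2, Finset.prod_insert hnoti]
            rw [hQA i a' a b b (hD.1 i hiTA) (fun _ _ => rfl)]
            ring
    · rw [if_neg hD]
      apply Finset.sum_eq_zero
      intro b' _
      rw [if_neg]
      rintro ⟨⟨c1, _⟩, ⟨c3, _⟩⟩
      exact hD ⟨c1, c3⟩
  have hlt : (∑ a' : Fin (n+1) → A, ∑ b' : Fin (n+1) → B,
        (if ((∀ j ∈ TA, a' j = a j) ∧ (∀ j ∈ idxLt n i, b' j = b j)) ∧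
            ((∀ j : Fin (n+1), (i:ℕ)+1 ≤ (j:ℕ) → a' j = a j) ∧
              (∀ j : Fin (n+1), (i:ℕ)+1 ≤ (j:ℕ) → b' j = b j))
          then ∏ j ∈ Finset.univ.filter (fun j : Fin (n+1) => (j:ℕ) < (i:ℕ)+1), (Q j a' b' * P j a' b')
          else 0))
      = ∑ a' : Fin (n+1) → A,
          (if (∀ j ∈ TA, a' j = a j) ∧ (∀ j : Fin (n+1), (i:ℕ)+1 ≤ (j:ℕ) → a' j = a j)
            then (∏ j ∈ Finset.univ.filter (fun j : Fin (n+1) => (j:ℕ) < (i:ℕ)),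
              (Q j a' b * P j a' b)) * P i a' b
            else 0) := by
    apply Finset.sum_congr rfl; intro a' _
    by_cases hD : (∀ j ∈ TA, a' j = a j) ∧ (∀ j : Fin (n+1), (i:ℕ)+1 ≤ (j:ℕ) → a' j = a j)
    · rw [if_pos hD]
      have hbeq : ∀ b' : Fin (n+1) → B,
          (((∀ j ∈ TA, a' j = a j) ∧ (∀ j ∈ idxLt n i, b' j = b j)) ∧
            ((∀ j : Fin (n+1), (i:ℕ)+1 ≤ (j:ℕ) → a' j = a j) ∧
              (∀ j : Fin (n+1), (i:ℕ)+1 ≤ (j:ℕ) → b' j = b j))) ↔ (∀ j : Fin (n+1), j ≠ i → b' j = b j) := by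
        intro b'
        constructor
        · rintro ⟨⟨_, c2⟩, ⟨_, c4⟩⟩
          intro j hj
          have hj' : (j:ℕ) ≠ (i:ℕ) := fun h => hj (Fin.ext h)
          by_cases hlt' : (j:ℕ) < (i:ℕ)
          · exact c2 j (mem_idxLt.mpr hlt')
          · exact c4 j (by omega)
        · intro hb'
          refine ⟨⟨hD.1, fun j hj => hb' j ?_⟩, ⟨hD.2, fun j hj => hb' j ?_⟩⟩
          · rw [mem_idxLt] at hj
            exact fun h => by rw [h] at hj; omega
          · exact fun h => by rw [h] at hj; omega
      calc (∑ b' : Fin (n+1) → B,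
            (if ((∀ j ∈ TA, a' j = a j) ∧ (∀ j ∈ idxLt n i, b' j = b j)) ∧
                ((∀ j : Fin (n+1), (i:ℕ)+1 ≤ (j:ℕ) → a' j = a j) ∧
                  (∀ j : Fin (n+1), (i:ℕ)+1 ≤ (j:ℕ) → b' j = b j))
              then ∏ j ∈ Finset.univ.filter (fun j : Fin (n+1) => (j:ℕ) < (i:ℕ)+1), (Q j a' b' * P j a' b')
              else 0))
          = ∑ b' : Fin (n+1) → B, (if (∀ j : Fin (n+1), j ≠ i → b' j = b j)
              then ∏ j ∈ Finset.univ.filter (fun j : Fin (n+1) => (j:ℕ) < (i:ℕ)+1), (Q j a' b' * P j a' b')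
              else 0) :=
            Finset.sum_congr rfl fun b' _ => if_congr (hbeq b') rfl rfl
        _ = ∑ y : B, ∏ j ∈ Finset.univ.filter (fun j : Fin (n+1) => (j:ℕ) < (i:ℕ)+1),
              (Q j a' (Function.update b i y) * P j a' (Function.update b i y)) :=
            sum_pin_all_but i b (fun b'' => ∏ j ∈ Finset.univ.filter (fun j : Fin (n+1) => (j:ℕ) < (i:ℕ)+1), (Q j a' b'' * P j a' b'')) _
        _ = ∑ y : B, (∏ j ∈ Finset.univ.filter (fun j : Fin (n+1) => (j:ℕ) < (i:ℕ)),
              (Q j a' b * P j a' b)) * P i a' b * Q i a' (Function.update b i y) := by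
            apply Finset.sum_congr rfl
            intro y _
            rw [hins2, Finset.prod_insert hnoti]
            rw [hGlowLow a' (Function.update b i y) b
              (fun j hj => Function.update_of_ne (Fin.ne_of_val_ne (by omega)) _ _)]
            rw [hP.2.2 i a' a' (Function.update b i y) b (fun _ _ => rfl)
              (fun j hj => Function.update_of_ne (Fin.ne_of_val_ne (by omega)) _ _)]
            ring
        _ = (∏ j ∈ Finset.univ.filter (fun j : Fin (n+1) => (j:ℕ) < (i:ℕ)),
              (Q j a' b * P j a' b)) * P i a' b := by
            rw [← Finset.mul_sum, hQ.2.1 i a' b, mul_one]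
    · rw [if_neg hD]
      apply Finset.sum_eq_zero
      intro b' _
      rw [if_neg]
      rintro ⟨⟨c1, _⟩, ⟨c3, _⟩⟩
      exact hD ⟨c1, c3⟩
  rw [hle, hlt, Finset.mul_sum]
  apply Finset.sum_congr rfl
  intro a' _
  by_cases hD : (∀ j ∈ TA, a' j = a j) ∧ (∀ j : Fin (n+1), (i:ℕ)+1 ≤ (j:ℕ) → a' j = a j)
  · rw [if_pos hD, if_pos hD]
  · rw [if_neg hD, if_neg hD, mul_zero]

lemma cmi_restrict (Q P : Fin (n+1) → (Fin (n+1) → A) → (Fin (n+1) → B) → ℝ)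
    (hQ : IsChannel Q) (hP : IsInput P)
    (hQA : ∀ (i : Fin (n+1)) (a a' : Fin (n+1) → A) (b b' : Fin (n+1) → B),
      a i = a' i → (∀ j : Fin (n+1), (j:ℕ) ≤ (i:ℕ) → b j = b' j) → Q i a b = Q i a' b')
    (i : Fin (n+1)) :
    cmi (joint Q P) (idxLe n i) i (idxLt n i) = cmi (joint Q P) {i} i (idxLt n i) := by
  have hnn : ∀ a b, 0 ≤ joint Q P a b := fun a b => joint_nonneg hQ.1 hP.1 a b
  have hgen : ∀ (c z w m : ℝ), m ≠ 0 → c * m * z / (m * w) = c * z / w := by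
    intro c z w m hm
    rw [show c * m * z = m * (c * z) by ring, mul_div_mul_left _ _ hm]
  unfold cmi
  rw [insert_idxLt]
  apply Finset.sum_congr rfl; intro a _
  apply Finset.sum_congr rfl; intro b _
  by_cases hz : joint Q P a b = 0
  · rw [hz, zero_mul, zero_mul]
  · have h0 : 0 < joint Q P a b := lt_of_le_of_ne (hnn a b) (Ne.symm hz)
    have hm1 : 0 < marg (joint Q P) (idxLe n i) (idxLt n i) a b :=
      lt_of_lt_of_le h0 (le_marg hnn _ _ a b)
    have hm2 : 0 < marg (joint Q P) {i} (idxLt n i) a b :=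
      lt_of_lt_of_le h0 (le_marg hnn _ _ a b)
    rw [key Q P hQ hP hQA i (idxLe n i) (mem_idxLe.mpr le_rfl) (fun j hj => mem_idxLe.mp hj) a b,
      key Q P hQ hP hQA i {i} (Finset.mem_singleton_self i)
        (fun j hj => by rw [Finset.mem_singleton] at hj; subst hj; exact le_rfl) a b]
    congr 1
    rw [hgen _ _ _ _ hm1.ne', hgen _ _ _ _ hm2.ne']

lemma DI_eq_sum_single (Q P : Fin (n+1) → (Fin (n+1) → A) → (Fin (n+1) → B) → ℝ)
    (hQ : IsChannel Q) (hP : IsInput P)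
    (hQA : ∀ (i : Fin (n+1)) (a a' : Fin (n+1) → A) (b b' : Fin (n+1) → B),
      a i = a' i → (∀ j : Fin (n+1), (j:ℕ) ≤ (i:ℕ) → b j = b' j) → Q i a b = Q i a' b') :
    DI (joint Q P) = ∑ i : Fin (n+1), cmi (joint Q P) {i} i (idxLt n i) :=
  Finset.sum_congr rfl fun i _ => cmi_restrict Q P hQ hP hQA i

set_option maxHeartbeats 1000000 in
lemma marg_lt_form (Q P : Fin (n+1) → (Fin (n+1) → A) → (Fin (n+1) → B) → ℝ)
    (hQ : IsChannel Q) (hP : IsInput P) (i : Fin (n+1))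
    (TA : Finset (Fin (n+1))) (hTA : ∀ j ∈ TA, (j:ℕ) ≤ (i:ℕ))
    (a : Fin (n+1) → A) (b : Fin (n+1) → B) :
    marg (joint Q P) TA (idxLt n i) a b
      = ∑ a' : Fin (n+1) → A,
          (if (∀ j ∈ TA, a' j = a j) ∧ (∀ j : Fin (n+1), (i:ℕ)+1 ≤ (j:ℕ) → a' j = a j)
            then (∏ j ∈ Finset.univ.filter (fun j : Fin (n+1) => (j:ℕ) < (i:ℕ)),
              (Q j a' b * P j a' b)) * P i a' b
            else 0) := by
  have hSBlt : ∀ j ∈ idxLt n i, (j:ℕ) ≤ (i:ℕ) := fun j hj => le_of_lt (mem_idxLt.mp hj)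
  have hins2 : Finset.univ.filter (fun j : Fin (n+1) => (j:ℕ) < (i:ℕ)+1)
      = insert i (Finset.univ.filter (fun j : Fin (n+1) => (j:ℕ) < (i:ℕ))) := by
    ext j
    simp only [Finset.mem_filter, Finset.mem_univ, true_and, Finset.mem_insert, Fin.ext_iff]
    omega
  have hnoti : i ∉ Finset.univ.filter (fun j : Fin (n+1) => (j:ℕ) < (i:ℕ)) := by
    simp
  have hGlowLow : ∀ (a' : Fin (n+1) → A) (b1 b2 : Fin (n+1) → B),
      (∀ j : Fin (n+1), (j:ℕ) < (i:ℕ) → b1 j = b2 j) →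
      (∏ j ∈ Finset.univ.filter (fun j : Fin (n+1) => (j:ℕ) < (i:ℕ)), (Q j a' b1 * P j a' b1))
      = ∏ j ∈ Finset.univ.filter (fun j : Fin (n+1) => (j:ℕ) < (i:ℕ)), (Q j a' b2 * P j a' b2) := by
    intro a' b1 b2 hb
    apply Finset.prod_congr rfl
    intro j hj
    rw [Finset.mem_filter] at hj
    rw [hQ.2.2 j a' a' b1 b2 (fun _ _ => rfl) (fun j' hj' => hb j' (by omega)),
      hP.2.2 j a' a' b1 b2 (fun _ _ => rfl) (fun j' hj' => hb j' (by omega))]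
  rw [marg_form Q P hQ hP i TA _ hTA hSBlt a b]
  apply Finset.sum_congr rfl; intro a' _
  by_cases hD : (∀ j ∈ TA, a' j = a j) ∧ (∀ j : Fin (n+1), (i:ℕ)+1 ≤ (j:ℕ) → a' j = a j)
  · rw [if_pos hD]
    have hbeq : ∀ b' : Fin (n+1) → B,
        (((∀ j ∈ TA, a' j = a j) ∧ (∀ j ∈ idxLt n i, b' j = b j)) ∧
          ((∀ j : Fin (n+1), (i:ℕ)+1 ≤ (j:ℕ) → a' j = a j) ∧
            (∀ j : Fin (n+1), (i:ℕ)+1 ≤ (j:ℕ) → b' j = b j))) ↔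
          (∀ j : Fin (n+1), j ≠ i → b' j = b j) := by
      intro b'
      constructor
      · rintro ⟨⟨_, c2⟩, ⟨_, c4⟩⟩
        intro j hj
        have hj' : (j:ℕ) ≠ (i:ℕ) := fun h => hj (Fin.ext h)
        by_cases hlt' : (j:ℕ) < (i:ℕ)
        · exact c2 j (mem_idxLt.mpr hlt')
        · exact c4 j (by omega)
      · intro hb'
        refine ⟨⟨hD.1, fun j hj => hb' j ?_⟩, ⟨hD.2, fun j hj => hb' j ?_⟩⟩
        · rw [mem_idxLt] at hj
          exact fun h => by rw [h] at hj; omega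
        · exact fun h => by rw [h] at hj; omega
    calc (∑ b' : Fin (n+1) → B,
          (if ((∀ j ∈ TA, a' j = a j) ∧ (∀ j ∈ idxLt n i, b' j = b j)) ∧
              ((∀ j : Fin (n+1), (i:ℕ)+1 ≤ (j:ℕ) → a' j = a j) ∧
                (∀ j : Fin (n+1), (i:ℕ)+1 ≤ (j:ℕ) → b' j = b j))
            then ∏ j ∈ Finset.univ.filter (fun j : Fin (n+1) => (j:ℕ) < (i:ℕ)+1), (Q j a' b' * P j a' b')
            else 0))
        = ∑ b' : Fin (n+1) → B, (if (∀ j : Fin (n+1), j ≠ i → b' j = b j)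
            then ∏ j ∈ Finset.univ.filter (fun j : Fin (n+1) => (j:ℕ) < (i:ℕ)+1), (Q j a' b' * P j a' b')
            else 0) :=
          Finset.sum_congr rfl fun b' _ => if_congr (hbeq b') rfl rfl
      _ = ∑ y : B, ∏ j ∈ Finset.univ.filter (fun j : Fin (n+1) => (j:ℕ) < (i:ℕ)+1),
            (Q j a' (Function.update b i y) * P j a' (Function.update b i y)) :=
          sum_pin_all_but i b (fun b'' => ∏ j ∈ Finset.univ.filter
            (fun j : Fin (n+1) => (j:ℕ) < (i:ℕ)+1), (Q j a' b'' * P j a' b'')) _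
      _ = ∑ y : B, (∏ j ∈ Finset.univ.filter (fun j : Fin (n+1) => (j:ℕ) < (i:ℕ)),
            (Q j a' b * P j a' b)) * P i a' b * Q i a' (Function.update b i y) := by
          apply Finset.sum_congr rfl
          intro y _
          rw [hins2, Finset.prod_insert hnoti]
          rw [hGlowLow a' (Function.update b i y) b
            (fun j hj => Function.update_of_ne (Fin.ne_of_val_ne (by omega)) _ _)]
          rw [hP.2.2 i a' a' (Function.update b i y) b (fun _ _ => rfl)
            (fun j hj => Function.update_of_ne (Fin.ne_of_val_ne (by omega)) _ _)]
          ring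
      _ = (∏ j ∈ Finset.univ.filter (fun j : Fin (n+1) => (j:ℕ) < (i:ℕ)),
            (Q j a' b * P j a' b)) * P i a' b := by
          rw [← Finset.mul_sum, hQ.2.1 i a' b, mul_one]
  · rw [if_neg hD]
    apply Finset.sum_eq_zero
    intro b' _
    rw [if_neg]
    rintro ⟨⟨c1, _⟩, ⟨c3, _⟩⟩
    exact hD ⟨c1, c3⟩

set_option maxHeartbeats 1000000 in
lemma marg_restricted_fact (Q π : Fin (n+1) → (Fin (n+1) → A) → (Fin (n+1) → B) → ℝ)
    (hQ : IsChannel Q) (hπ : IsInput π)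
    (hres : ∀ (i : Fin (n+1)) (a a' : Fin (n+1) → A) (b : Fin (n+1) → B),
      a i = a' i → π i a b = π i a' b)
    (i : Fin (n+1)) (a : Fin (n+1) → A) (b : Fin (n+1) → B) :
    marg (joint Q π) {i} (idxLt n i) a b = π i a b * margB (joint Q π) (idxLt n i) b := by
  have hGdep : ∀ (a' : Fin (n+1) → A) (x : A),
      (∏ j ∈ Finset.univ.filter (fun j : Fin (n+1) => (j:ℕ) < (i:ℕ)),
        (Q j (Function.update a' i x) b * π j (Function.update a' i x) b))
      = ∏ j ∈ Finset.univ.filter (fun j : Fin (n+1) => (j:ℕ) < (i:ℕ)), (Q j a' b * π j a' b) := by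
    intro a' x
    apply Finset.prod_congr rfl
    intro j hj
    rw [Finset.mem_filter] at hj
    rw [hQ.2.2 j (Function.update a' i x) a' b b
        (fun j' hj' => Function.update_of_ne (Fin.ne_of_val_ne (by omega)) _ _) (fun _ _ => rfl),
      hπ.2.2 j (Function.update a' i x) a' b b
        (fun j' hj' => Function.update_of_ne (Fin.ne_of_val_ne (by omega)) _ _) (fun _ _ => rfl)]
  have hPinDep : ∀ (a' : Fin (n+1) → A) (x : A),
      (∀ j : Fin (n+1), (i:ℕ)+1 ≤ (j:ℕ) → Function.update a' i x j = a j) ↔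
        (∀ j : Fin (n+1), (i:ℕ)+1 ≤ (j:ℕ) → a' j = a j) := by
    intro a' x
    constructor
    · intro h j hj
      have h2 := h j hj
      rwa [Function.update_of_ne (Fin.ne_of_val_ne (by omega)) _ _] at h2
    · intro h j hj
      rw [Function.update_of_ne (Fin.ne_of_val_ne (by omega)) _ _]
      exact h j hj
  have hstep1 : marg (joint Q π) {i} (idxLt n i) a b
      = π i a b * ∑ a' : Fin (n+1) → A,
          (if a' i = a i then
            (if (∀ j : Fin (n+1), (i:ℕ)+1 ≤ (j:ℕ) → a' j = a j)
              then ∏ j ∈ Finset.univ.filter (fun j : Fin (n+1) => (j:ℕ) < (i:ℕ)), (Q j a' b * π j a' b)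
              else 0) else 0) := by
    rw [marg_lt_form Q π hQ hπ i {i}
      (fun j hj => by rw [Finset.mem_singleton] at hj; subst hj; exact le_rfl) a b]
    rw [Finset.mul_sum]
    apply Finset.sum_congr rfl
    intro a' _
    by_cases hx : a' i = a i
    · rw [if_pos hx]
      by_cases hp : (∀ j : Fin (n+1), (i:ℕ)+1 ≤ (j:ℕ) → a' j = a j)
      · rw [if_pos hp, if_pos ⟨fun j hj => by rw [Finset.mem_singleton] at hj; subst hj; exact hx, hp⟩]
        rw [hres i a' a b hx]
        ring
      · rw [if_neg hp, if_neg (fun c => hp c.2), mul_zero]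
    · rw [if_neg hx, if_neg (fun c => hx (c.1 i (Finset.mem_singleton_self i))), mul_zero]
  have hV : ∀ a' : Fin (n+1) → A,
      (if (∀ j ∈ (∅ : Finset (Fin (n+1))), a' j = a j) ∧
          (∀ j : Fin (n+1), (i:ℕ)+1 ≤ (j:ℕ) → a' j = a j)
        then (∏ j ∈ Finset.univ.filter (fun j : Fin (n+1) => (j:ℕ) < (i:ℕ)),
          (Q j a' b * π j a' b)) * π i a' b
        else 0)
      = ∑ x : A, (if a' i = x then
          (if (∀ j : Fin (n+1), (i:ℕ)+1 ≤ (j:ℕ) → a' j = a j)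
            then (∏ j ∈ Finset.univ.filter (fun j : Fin (n+1) => (j:ℕ) < (i:ℕ)),
              (Q j a' b * π j a' b)) * π i (Function.update a i x) b
            else 0) else 0) := by
    intro a'
    rw [Finset.sum_ite_eq Finset.univ (a' i) (fun x =>
      (if (∀ j : Fin (n+1), (i:ℕ)+1 ≤ (j:ℕ) → a' j = a j)
        then (∏ j ∈ Finset.univ.filter (fun j : Fin (n+1) => (j:ℕ) < (i:ℕ)),
          (Q j a' b * π j a' b)) * π i (Function.update a i x) b
        else 0))]
    rw [if_pos (Finset.mem_univ _)]
    by_cases hp : (∀ j : Fin (n+1), (i:ℕ)+1 ≤ (j:ℕ) → a' j = a j)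
    · rw [if_pos ⟨fun j hj => absurd hj (Finset.notMem_empty j), hp⟩, if_pos hp]
      congr 1
      exact hres i a' (Function.update a i (a' i)) b (by rw [Function.update_self])
    · rw [if_neg (fun c => hp c.2), if_neg hp]
  have hswap : ∀ x : A,
      (∑ a' : Fin (n+1) → A, (if a' i = x then
        (if (∀ j : Fin (n+1), (i:ℕ)+1 ≤ (j:ℕ) → a' j = a j)
          then ∏ j ∈ Finset.univ.filter (fun j : Fin (n+1) => (j:ℕ) < (i:ℕ)), (Q j a' b * π j a' b)
          else 0) else 0))
      = ∑ a' : Fin (n+1) → A, (if a' i = a i then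
        (if (∀ j : Fin (n+1), (i:ℕ)+1 ≤ (j:ℕ) → a' j = a j)
          then ∏ j ∈ Finset.univ.filter (fun j : Fin (n+1) => (j:ℕ) < (i:ℕ)), (Q j a' b * π j a' b)
          else 0) else 0) := by
    intro x
    apply sum_swap_coordA i x (a i)
    intro a' v
    exact if_congr (hPinDep a' v) (hGdep a' v) rfl
  have hstep2 : margB (joint Q π) (idxLt n i) b
      = ∑ a' : Fin (n+1) → A,
          (if a' i = a i then
            (if (∀ j : Fin (n+1), (i:ℕ)+1 ≤ (j:ℕ) → a' j = a j)
              then ∏ j ∈ Finset.univ.filter (fun j : Fin (n+1) => (j:ℕ) < (i:ℕ)), (Q j a' b * π j a' b)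
              else 0) else 0) := by
    rw [← marg_empty_eq_margB (joint Q π) (idxLt n i) a b]
    rw [marg_lt_form Q π hQ hπ i ∅ (fun j hj => absurd hj (Finset.notMem_empty j)) a b]
    rw [Finset.sum_congr rfl fun a' _ => hV a', Finset.sum_comm]
    have hfac : ∀ x : A,
        (∑ a' : Fin (n+1) → A, (if a' i = x then
          (if (∀ j : Fin (n+1), (i:ℕ)+1 ≤ (j:ℕ) → a' j = a j)
            then (∏ j ∈ Finset.univ.filter (fun j : Fin (n+1) => (j:ℕ) < (i:ℕ)),
              (Q j a' b * π j a' b)) * π i (Function.update a i x) b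
            else 0) else 0))
        = π i (Function.update a i x) b *
          ∑ a' : Fin (n+1) → A, (if a' i = x then
            (if (∀ j : Fin (n+1), (i:ℕ)+1 ≤ (j:ℕ) → a' j = a j)
              then ∏ j ∈ Finset.univ.filter (fun j : Fin (n+1) => (j:ℕ) < (i:ℕ)), (Q j a' b * π j a' b)
              else 0) else 0) := by
      intro x
      rw [Finset.mul_sum]
      apply Finset.sum_congr rfl
      intro a' _
      by_cases hx : a' i = x
      · rw [if_pos hx, if_pos hx]
        by_cases hp : (∀ j : Fin (n+1), (i:ℕ)+1 ≤ (j:ℕ) → a' j = a j)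
        · rw [if_pos hp, if_pos hp]
          ring
        · rw [if_neg hp, if_neg hp, mul_zero]
      · rw [if_neg hx, if_neg hx, mul_zero]
    rw [Finset.sum_congr rfl fun x _ => hfac x]
    rw [Finset.sum_congr rfl fun x _ => by rw [hswap x]]
    rw [← Finset.sum_mul, hπ.2.1 i a b, one_mul]
  rw [hstep1, hstep2]

noncomputable def piK (Q P : Fin (n+1) → (Fin (n+1) → A) → (Fin (n+1) → B) → ℝ) :
    Fin (n+1) → (Fin (n+1) → A) → (Fin (n+1) → B) → ℝ :=
  fun i a b => if margB (joint Q P) (idxLt n i) b = 0 then (Fintype.card A : ℝ)⁻¹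
    else marg (joint Q P) {i} (idxLt n i) a b / margB (joint Q P) (idxLt n i) b

lemma piK_res (Q P : Fin (n+1) → (Fin (n+1) → A) → (Fin (n+1) → B) → ℝ) :
    ∀ (i : Fin (n+1)) (a a' : Fin (n+1) → A) (b : Fin (n+1) → B),
      a i = a' i → piK Q P i a b = piK Q P i a' b := by
  intro i a a' b h
  have hm : marg (joint Q P) {i} (idxLt n i) a b = marg (joint Q P) {i} (idxLt n i) a' b :=
    marg_dep (fun j hj => by rw [Finset.mem_singleton] at hj; subst hj; exact h) (fun _ _ => rfl)
  simp only [piK, hm]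

lemma isInput_piK (Q P : Fin (n+1) → (Fin (n+1) → A) → (Fin (n+1) → B) → ℝ)
    (hQ : IsChannel Q) (hP : IsInput P) [Nonempty A] : IsInput (piK Q P) := by
  have hnn : ∀ a b, 0 ≤ joint Q P a b := fun a b => joint_nonneg hQ.1 hP.1 a b
  refine ⟨?_, ?_, ?_⟩
  · intro i a b
    unfold piK
    split
    · positivity
    · exact div_nonneg (marg_nonneg hnn _ _ a b) (margB_nonneg hnn _ b)
  · intro i a b
    by_cases h : margB (joint Q P) (idxLt n i) b = 0
    · simp only [piK, h, if_pos]
      rw [Finset.sum_const, Finset.card_univ, nsmul_eq_mul]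
      rw [mul_inv_cancel₀]
      exact_mod_cast Fintype.card_ne_zero
    · simp only [piK, h, if_neg, ite_false]
      rw [← Finset.sum_div, ← margB_eq_sum_marg (joint Q P) (idxLt n i) i a b, div_self h]
  · intro i a a' b b' ha hb
    have hd : margB (joint Q P) (idxLt n i) b = margB (joint Q P) (idxLt n i) b' :=
      margB_dep (fun j hj => hb j (mem_idxLt.mp hj))
    have hm : marg (joint Q P) {i} (idxLt n i) a b = marg (joint Q P) {i} (idxLt n i) a' b' :=
      marg_dep (fun j hj => ha j (le_of_eq (congrArg Fin.val (Finset.mem_singleton.mp hj))))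
        (fun j hj => hb j (mem_idxLt.mp hj))
    simp only [piK, hd, hm]

lemma piK_mul (Q P : Fin (n+1) → (Fin (n+1) → A) → (Fin (n+1) → B) → ℝ)
    (hQ : IsChannel Q) (hP : IsInput P) (i : Fin (n+1)) (a : Fin (n+1) → A) (b : Fin (n+1) → B) :
    marg (joint Q P) {i} (idxLt n i) a b = piK Q P i a b * margB (joint Q P) (idxLt n i) b := by
  have hnn : ∀ a b, 0 ≤ joint Q P a b := fun a b => joint_nonneg hQ.1 hP.1 a b
  by_cases h : margB (joint Q P) (idxLt n i) b = 0
  · have h0 : marg (joint Q P) {i} (idxLt n i) a b = 0 :=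
      le_antisymm (h ▸ marg_le_margB hnn _ _ a b) (marg_nonneg hnn _ _ a b)
    rw [h0, h, mul_zero]
  · simp only [piK, h, if_neg, ite_false]
    rw [div_mul_cancel₀ _ h]

lemma margB_empty_one (Q P : Fin (n+1) → (Fin (n+1) → A) → (Fin (n+1) → B) → ℝ)
    (hQ : IsChannel Q) (hP : IsInput P) [Nonempty A] (b : Fin (n+1) → B) :
    margB (joint Q P) ∅ b = 1 := by
  classical
  set a0 : Fin (n+1) → A := fun _ => Classical.arbitrary A with ha0
  have hs := sumout Q P hQ hP (n+1) 0 (by omega) (fun _ _ => 1) (fun _ _ _ _ _ _ => rfl) a0 b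
  have hfil : Finset.univ.filter (fun j : Fin (n+1) => 0 ≤ (j:ℕ)) = Finset.univ :=
    Finset.filter_true_of_mem (fun _ _ => Nat.zero_le _)
  have hL : margB (joint Q P) ∅ b
      = ∑ a' : Fin (n+1) → A, ∑ b' : Fin (n+1) → B,
          (1:ℝ) * ∏ j ∈ Finset.univ.filter (fun j : Fin (n+1) => 0 ≤ (j:ℕ)), (Q j a' b' * P j a' b') := by
    unfold margB
    apply Finset.sum_congr rfl; intro a' _
    apply Finset.sum_congr rfl; intro b' _
    rw [if_pos (fun j hj => absurd hj (Finset.notMem_empty j)), hfil, one_mul]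
    rfl
  rw [hL, hs]
  have hpt : ∀ (a' : Fin (n+1) → A) (b' : Fin (n+1) → B),
      (if (∀ j : Fin (n+1), 0 ≤ (j:ℕ) → a' j = a0 j) ∧ (∀ j : Fin (n+1), 0 ≤ (j:ℕ) → b' j = b j)
        then (1:ℝ) else 0)
      = if a' = a0 then (if b' = b then (1:ℝ) else 0) else 0 := by
    intro a' b'
    by_cases h1 : a' = a0
    · by_cases h2 : b' = b
      · subst h1; subst h2
        rw [if_pos ⟨fun _ _ => rfl, fun _ _ => rfl⟩, if_pos rfl, if_pos rfl]
      · rw [if_pos h1, if_neg h2, if_neg]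
        rintro ⟨_, c2⟩
        exact h2 (funext fun j => c2 j (Nat.zero_le _))
    · rw [if_neg h1, if_neg]
      rintro ⟨c1, _⟩
      exact h1 (funext fun j => c1 j (Nat.zero_le _))
  rw [Finset.sum_congr rfl fun a' _ => Finset.sum_congr rfl fun b' _ => hpt a' b']
  simp

lemma idxLt_zero {i : Fin (n+1)} (h : (i:ℕ) = 0) : idxLt n i = ∅ := by
  apply Finset.eq_empty_of_forall_notMem
  intro j hj
  rw [mem_idxLt] at hj
  omega

lemma idxLt_succ {i i' : Fin (n+1)} (h : (i':ℕ) = (i:ℕ)+1) : idxLt n i' = idxLe n i := by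
  ext j
  rw [mem_idxLt, mem_idxLe]
  omega

lemma chain_step (Q P : Fin (n+1) → (Fin (n+1) → A) → (Fin (n+1) → B) → ℝ)
    (hQ : IsChannel Q) (hP : IsInput P)
    (hQA : ∀ (i : Fin (n+1)) (a a' : Fin (n+1) → A) (b b' : Fin (n+1) → B),
      a i = a' i → (∀ j : Fin (n+1), (j:ℕ) ≤ (i:ℕ) → b j = b' j) → Q i a b = Q i a' b')
    [Nonempty A] (i : Fin (n+1))
    (hlt : ∀ b, margB (joint Q P) (idxLt n i) b = margB (joint Q (piK Q P)) (idxLt n i) b) :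
    (∀ a b, marg (joint Q P) {i} (idxLt n i) a b = marg (joint Q (piK Q P)) {i} (idxLt n i) a b) ∧
    (∀ a b, marg (joint Q P) {i} (idxLe n i) a b = marg (joint Q (piK Q P)) {i} (idxLe n i) a b) ∧
    (∀ b, margB (joint Q P) (idxLe n i) b = margB (joint Q (piK Q P)) (idxLe n i) b) := by
  have hπ : IsInput (piK Q P) := isInput_piK Q P hQ hP
  have h1 : ∀ a b, marg (joint Q P) {i} (idxLt n i) a b
      = marg (joint Q (piK Q P)) {i} (idxLt n i) a b := by
    intro a b
    rw [piK_mul Q P hQ hP i a b,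
      marg_restricted_fact Q (piK Q P) hQ hπ (piK_res Q P) i a b, hlt b]
  have h2 : ∀ a b, marg (joint Q P) {i} (idxLe n i) a b
      = marg (joint Q (piK Q P)) {i} (idxLe n i) a b := by
    intro a b
    have hTA1 : i ∈ ({i} : Finset (Fin (n+1))) := Finset.mem_singleton_self i
    have hTA2 : ∀ j ∈ ({i} : Finset (Fin (n+1))), (j:ℕ) ≤ (i:ℕ) :=
      fun j hj => le_of_eq (congrArg Fin.val (Finset.mem_singleton.mp hj))
    rw [key Q P hQ hP hQA i {i} hTA1 hTA2 a b,
      key Q (piK Q P) hQ hπ hQA i {i} hTA1 hTA2 a b, h1 a b]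
  refine ⟨h1, h2, ?_⟩
  intro b
  have a0 : Fin (n+1) → A := fun _ => Classical.arbitrary A
  rw [margB_eq_sum_marg (joint Q P) (idxLe n i) i a0 b,
    margB_eq_sum_marg (joint Q (piK Q P)) (idxLe n i) i a0 b]
  exact Finset.sum_congr rfl fun x _ => h2 _ b

lemma margB_lt_all (Q P : Fin (n+1) → (Fin (n+1) → A) → (Fin (n+1) → B) → ℝ)
    (hQ : IsChannel Q) (hP : IsInput P)
    (hQA : ∀ (i : Fin (n+1)) (a a' : Fin (n+1) → A) (b b' : Fin (n+1) → B),
      a i = a' i → (∀ j : Fin (n+1), (j:ℕ) ≤ (i:ℕ) → b j = b' j) → Q i a b = Q i a' b')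
    [Nonempty A] :
    ∀ (k : ℕ) (i : Fin (n+1)), (i:ℕ) = k →
      ∀ b, margB (joint Q P) (idxLt n i) b = margB (joint Q (piK Q P)) (idxLt n i) b := by
  have hπ : IsInput (piK Q P) := isInput_piK Q P hQ hP
  intro k
  induction k with
  | zero =>
    intro i hi b
    rw [idxLt_zero hi, margB_empty_one Q P hQ hP b, margB_empty_one Q (piK Q P) hQ hπ b]
  | succ k ih =>
    intro i' hi' b
    have hk : k < n + 1 := by have := i'.isLt; omega
    have hii : ((⟨k, hk⟩ : Fin (n+1)) : ℕ) = k := rfl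
    rw [idxLt_succ (i := ⟨k, hk⟩) (by omega)]
    exact (chain_step Q P hQ hP hQA ⟨k, hk⟩ (ih ⟨k, hk⟩ rfl)).2.2 b

lemma all_marg_eq (Q P : Fin (n+1) → (Fin (n+1) → A) → (Fin (n+1) → B) → ℝ)
    (hQ : IsChannel Q) (hP : IsInput P)
    (hQA : ∀ (i : Fin (n+1)) (a a' : Fin (n+1) → A) (b b' : Fin (n+1) → B),
      a i = a' i → (∀ j : Fin (n+1), (j:ℕ) ≤ (i:ℕ) → b j = b' j) → Q i a b = Q i a' b')
    [Nonempty A] (i : Fin (n+1)) :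
    (∀ b, margB (joint Q P) (idxLt n i) b = margB (joint Q (piK Q P)) (idxLt n i) b) ∧
    (∀ a b, marg (joint Q P) {i} (idxLt n i) a b = marg (joint Q (piK Q P)) {i} (idxLt n i) a b) ∧
    (∀ a b, marg (joint Q P) {i} (idxLe n i) a b = marg (joint Q (piK Q P)) {i} (idxLe n i) a b) ∧
    (∀ b, margB (joint Q P) (idxLe n i) b = margB (joint Q (piK Q P)) (idxLe n i) b) := by
  have hlt := margB_lt_all Q P hQ hP hQA (i:ℕ) i rfl
  exact ⟨hlt, chain_step Q P hQ hP hQA i hlt⟩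

lemma countB_indep {ι X : Type} [Fintype ι] [DecidableEq ι] [Fintype X] [DecidableEq X]
    (C : ι → Prop) [DecidablePred C] (b b' : ι → X)
    (D : ∀ s : ι → X, Decidable (∀ j, C j → s j = b j))
    (D' : ∀ s : ι → X, Decidable (∀ j, C j → s j = b' j)) :
    ∑ s : ι → X, (@ite ℝ (∀ j, C j → s j = b j) (D s) 1 0)
      = ∑ s : ι → X, (@ite ℝ (∀ j, C j → s j = b' j) (D' s) 1 0) := by
  have e1 : ∀ s : ι → X, (@ite ℝ (∀ j, C j → s j = b j) (D s) 1 0)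
      = if ∀ j, C j → s j = b j then (1:ℝ) else 0 := fun s => by
    rw [Subsingleton.elim (D s) Fintype.decidableForallFintype]
  have e2 : ∀ s : ι → X, (@ite ℝ (∀ j, C j → s j = b' j) (D' s) 1 0)
      = if ∀ j, C j → s j = b' j then (1:ℝ) else 0 := fun s => by
    rw [Subsingleton.elim (D' s) Fintype.decidableForallFintype]
  rw [Finset.sum_congr rfl fun s _ => e1 s, Finset.sum_congr rfl fun s _ => e2 s]
  have h := sum_perm_coord (fun j => Equiv.swap (b j) (b' j))
    (fun s => if ∀ j, C j → s j = b' j then (1:ℝ) else 0)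
  rw [← h]
  apply Finset.sum_congr rfl
  intro s _
  apply if_congr _ rfl rfl
  constructor
  · intro hc j hj
    show Equiv.swap (b j) (b' j) (s j) = b' j
    rw [hc j hj]
    exact Equiv.swap_apply_left _ _
  · intro hc j hj
    have h2 : Equiv.swap (b j) (b' j) (s j) = b' j := hc j hj
    have h3 : Equiv.swap (b j) (b' j) (b j) = b' j := Equiv.swap_apply_left _ _
    exact (Equiv.swap (b j) (b' j)).injective (h2.trans h3.symm)

set_option maxHeartbeats 2000000 in
lemma group_sum (μ μ' : (Fin (n+1) → A) → (Fin (n+1) → B) → ℝ) (i : Fin (n+1))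
    (f : (Fin (n+1) → A) → (Fin (n+1) → B) → ℝ) [Nonempty A]
    (hf : ∀ (a a' : Fin (n+1) → A) (b b' : Fin (n+1) → B),
      a i = a' i → (∀ j : Fin (n+1), (j:ℕ) ≤ (i:ℕ) → b j = b' j) → f a b = f a' b')
    (hm : ∀ a b, marg μ {i} (idxLe n i) a b = marg μ' {i} (idxLe n i) a b) :
    ∑ a : Fin (n+1) → A, ∑ b : Fin (n+1) → B, μ a b * f a b
      = ∑ a : Fin (n+1) → A, ∑ b : Fin (n+1) → B, μ' a b * f a b := by
  classical
  rcases isEmpty_or_nonempty B with hB | hB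
  · have hBe : IsEmpty (Fin (n+1) → B) := ⟨fun g => IsEmpty.false (g 0)⟩
    have hz : ∀ ν : (Fin (n+1) → A) → (Fin (n+1) → B) → ℝ,
        (∑ a : Fin (n+1) → A, ∑ b : Fin (n+1) → B, ν a b * f a b) = 0 := by
      intro ν
      apply Finset.sum_eq_zero
      intro a _
      rw [Finset.univ_eq_empty, Finset.sum_empty]
    rw [hz μ, hz μ']
  · set a0 : Fin (n+1) → A := fun _ => Classical.arbitrary A with ha0def
    set b0 : Fin (n+1) → B := fun _ => Classical.arbitrary B with hb0def
    set N1 : ℝ := ∑ r : Fin (n+1) → A, (if r i = a0 i then (1:ℝ) else 0) with hN1def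
    set N2 : ℝ := ∑ s : Fin (n+1) → B,
      (if ∀ j : Fin (n+1), (j:ℕ) ≤ (i:ℕ) → s j = b0 j then (1:ℝ) else 0) with hN2def
    have hN1 : ∀ v : A, (∑ r : Fin (n+1) → A, (if r i = v then (1:ℝ) else 0)) = N1 := by
      intro v
      exact sum_swap_coordA i v (a0 i) (fun _ => (1:ℝ)) (fun _ _ => rfl)
    have hN2 : ∀ b : Fin (n+1) → B,
        (∑ s : Fin (n+1) → B, (if ∀ j : Fin (n+1), (j:ℕ) ≤ (i:ℕ) → s j = b j then (1:ℝ) else 0))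
          = N2 := by
      intro b
      exact countB_indep (fun j : Fin (n+1) => (j:ℕ) ≤ (i:ℕ)) b b0 _ _
    have hN1pos : 0 < N1 := by
      calc (0:ℝ) < 1 := one_pos
        _ = (if a0 i = a0 i then (1:ℝ) else 0) := by simp
        _ ≤ N1 := by
            rw [hN1def]
            exact Finset.single_le_sum (f := fun r : Fin (n+1) → A => if r i = a0 i then (1:ℝ) else 0)
              (fun r _ => by positivity) (Finset.mem_univ a0)
    have hN2pos : 0 < N2 := by
      calc (0:ℝ) < 1 := one_pos
        _ = (if ∀ j : Fin (n+1), (j:ℕ) ≤ (i:ℕ) → b0 j = b0 j then (1:ℝ) else 0) := by simp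
        _ ≤ N2 := by
            rw [hN2def]
            exact Finset.single_le_sum
              (f := fun s : Fin (n+1) → B =>
                if ∀ j : Fin (n+1), (j:ℕ) ≤ (i:ℕ) → s j = b0 j then (1:ℝ) else 0)
              (fun s _ => by positivity) (Finset.mem_univ b0)
    have hkey : ∀ ν : (Fin (n+1) → A) → (Fin (n+1) → B) → ℝ,
        (∑ r : Fin (n+1) → A, ∑ s : Fin (n+1) → B, marg ν {i} (idxLe n i) r s * f r s)
          = (N1 * N2) * ∑ a : Fin (n+1) → A, ∑ b : Fin (n+1) → B, ν a b * f a b := by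
      intro ν
      have hC : ∀ (α r : Fin (n+1) → A) (β s : Fin (n+1) → B),
          (if (∀ j ∈ ({i} : Finset (Fin (n+1))), α j = r j) ∧ (∀ j ∈ idxLe n i, β j = s j)
            then ν α β else 0) * f r s
          = (if r i = α i then (1:ℝ) else 0) *
              ((if ∀ j : Fin (n+1), (j:ℕ) ≤ (i:ℕ) → s j = β j then (1:ℝ) else 0) *
                (ν α β * f α β)) := by
        intro α r β s
        by_cases h1 : r i = α i
        · by_cases h2 : ∀ j : Fin (n+1), (j:ℕ) ≤ (i:ℕ) → s j = β j
          · rw [if_pos h1, if_pos h2, if_pos ⟨fun j hj => by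
                rw [Finset.mem_singleton] at hj; subst hj; exact h1.symm,
              fun j hj => (h2 j (mem_idxLe.mp hj)).symm⟩]
            rw [hf α r β s h1.symm (fun j hj => (h2 j hj).symm)]
            ring
          · rw [if_neg h2, if_neg (show ¬((∀ j ∈ ({i} : Finset (Fin (n+1))), α j = r j) ∧
                (∀ j ∈ idxLe n i, β j = s j)) from fun hc =>
              h2 (fun j hj => (hc.2 j (mem_idxLe.mpr hj)).symm))]
            ring
        · rw [if_neg h1, if_neg (show ¬((∀ j ∈ ({i} : Finset (Fin (n+1))), α j = r j) ∧
              (∀ j ∈ idxLe n i, β j = s j)) from fun hc =>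
            h1 ((hc.1 i (Finset.mem_singleton_self i)).symm))]
          ring
      calc (∑ r : Fin (n+1) → A, ∑ s : Fin (n+1) → B, marg ν {i} (idxLe n i) r s * f r s)
          = ∑ r : Fin (n+1) → A, ∑ s : Fin (n+1) → B, ∑ α : Fin (n+1) → A, ∑ β : Fin (n+1) → B,
              (if (∀ j ∈ ({i} : Finset (Fin (n+1))), α j = r j) ∧ (∀ j ∈ idxLe n i, β j = s j)
                then ν α β else 0) * f r s := by
            apply Finset.sum_congr rfl; intro r _
            apply Finset.sum_congr rfl; intro s _
            unfold marg
            rw [Finset.sum_mul]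
            apply Finset.sum_congr rfl; intro α _
            rw [Finset.sum_mul]
        _ = ∑ α : Fin (n+1) → A, ∑ β : Fin (n+1) → B, ∑ r : Fin (n+1) → A, ∑ s : Fin (n+1) → B,
              (if (∀ j ∈ ({i} : Finset (Fin (n+1))), α j = r j) ∧ (∀ j ∈ idxLe n i, β j = s j)
                then ν α β else 0) * f r s := by
            rw [show (∑ r : Fin (n+1) → A, ∑ s : Fin (n+1) → B, ∑ α : Fin (n+1) → A, ∑ β : Fin (n+1) → B,
              (if (∀ j ∈ ({i} : Finset (Fin (n+1))), α j = r j) ∧ (∀ j ∈ idxLe n i, β j = s j)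
                then ν α β else 0) * f r s)
              = ∑ r : Fin (n+1) → A, ∑ α : Fin (n+1) → A, ∑ s : Fin (n+1) → B, ∑ β : Fin (n+1) → B,
              (if (∀ j ∈ ({i} : Finset (Fin (n+1))), α j = r j) ∧ (∀ j ∈ idxLe n i, β j = s j)
                then ν α β else 0) * f r s from
              Finset.sum_congr rfl fun r _ => Finset.sum_comm]
            rw [show (∑ r : Fin (n+1) → A, ∑ α : Fin (n+1) → A, ∑ s : Fin (n+1) → B, ∑ β : Fin (n+1) → B,
              (if (∀ j ∈ ({i} : Finset (Fin (n+1))), α j = r j) ∧ (∀ j ∈ idxLe n i, β j = s j)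
                then ν α β else 0) * f r s)
              = ∑ α : Fin (n+1) → A, ∑ r : Fin (n+1) → A, ∑ s : Fin (n+1) → B, ∑ β : Fin (n+1) → B,
              (if (∀ j ∈ ({i} : Finset (Fin (n+1))), α j = r j) ∧ (∀ j ∈ idxLe n i, β j = s j)
                then ν α β else 0) * f r s from Finset.sum_comm]
            apply Finset.sum_congr rfl; intro α _
            rw [show (∑ r : Fin (n+1) → A, ∑ s : Fin (n+1) → B, ∑ β : Fin (n+1) → B,
              (if (∀ j ∈ ({i} : Finset (Fin (n+1))), α j = r j) ∧ (∀ j ∈ idxLe n i, β j = s j)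
                then ν α β else 0) * f r s)
              = ∑ r : Fin (n+1) → A, ∑ β : Fin (n+1) → B, ∑ s : Fin (n+1) → B,
              (if (∀ j ∈ ({i} : Finset (Fin (n+1))), α j = r j) ∧ (∀ j ∈ idxLe n i, β j = s j)
                then ν α β else 0) * f r s from
              Finset.sum_congr rfl fun r _ => Finset.sum_comm]
            exact Finset.sum_comm
        _ = ∑ α : Fin (n+1) → A, ∑ β : Fin (n+1) → B, (N1 * N2) * (ν α β * f α β) := by
            apply Finset.sum_congr rfl; intro α _
            apply Finset.sum_congr rfl; intro β _
            calc (∑ r : Fin (n+1) → A, ∑ s : Fin (n+1) → B,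
                  (if (∀ j ∈ ({i} : Finset (Fin (n+1))), α j = r j) ∧ (∀ j ∈ idxLe n i, β j = s j)
                    then ν α β else 0) * f r s)
                = ∑ r : Fin (n+1) → A, ∑ s : Fin (n+1) → B,
                    (if r i = α i then (1:ℝ) else 0) *
                      ((if ∀ j : Fin (n+1), (j:ℕ) ≤ (i:ℕ) → s j = β j then (1:ℝ) else 0) *
                        (ν α β * f α β)) :=
                  Finset.sum_congr rfl fun r _ => Finset.sum_congr rfl fun s _ => hC α r β s
              _ = ∑ r : Fin (n+1) → A, (if r i = α i then (1:ℝ) else 0) * (N2 * (ν α β * f α β)) := by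
                  apply Finset.sum_congr rfl; intro r _
                  rw [← Finset.mul_sum, ← Finset.sum_mul, hN2 β]
              _ = N1 * (N2 * (ν α β * f α β)) := by
                  rw [← Finset.sum_mul, hN1 (α i)]
              _ = (N1 * N2) * (ν α β * f α β) := by ring
        _ = (N1 * N2) * ∑ a : Fin (n+1) → A, ∑ b : Fin (n+1) → B, ν a b * f a b := by
            refine Eq.trans ?_ (Finset.mul_sum _ _ _).symm
            apply Finset.sum_congr rfl; intro α _
            exact (Finset.mul_sum _ _ _).symm
    have hL : (∑ r : Fin (n+1) → A, ∑ s : Fin (n+1) → B, marg μ {i} (idxLe n i) r s * f r s)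
        = ∑ r : Fin (n+1) → A, ∑ s : Fin (n+1) → B, marg μ' {i} (idxLe n i) r s * f r s := by
      apply Finset.sum_congr rfl; intro r _
      apply Finset.sum_congr rfl; intro s _
      rw [hm r s]
    have h1 := hkey μ
    rw [hL, hkey μ'] at h1
    exact (mul_left_cancel₀ (mul_ne_zero hN1pos.ne' hN2pos.ne') h1).symm

set_option maxHeartbeats 1000000 in
lemma cmi_single_eq (Q P : Fin (n+1) → (Fin (n+1) → A) → (Fin (n+1) → B) → ℝ)
    (hQ : IsChannel Q) (hP : IsInput P)
    (hQA : ∀ (i : Fin (n+1)) (a a' : Fin (n+1) → A) (b b' : Fin (n+1) → B),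
      a i = a' i → (∀ j : Fin (n+1), (j:ℕ) ≤ (i:ℕ) → b j = b' j) → Q i a b = Q i a' b')
    [Nonempty A] (i : Fin (n+1)) :
    cmi (joint Q P) {i} i (idxLt n i) = cmi (joint Q (piK Q P)) {i} i (idxLt n i) := by
  obtain ⟨hblt, hslt, hsle, hble⟩ := all_marg_eq Q P hQ hP hQA i
  set μ := joint Q P with hμdef
  set μ' := joint Q (piK Q P) with hμ'def
  set f : (Fin (n+1) → A) → (Fin (n+1) → B) → ℝ := fun a b =>
    Real.log (marg μ {i} (idxLe n i) a b * marg μ ∅ (idxLt n i) a b /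
      (marg μ {i} (idxLt n i) a b * marg μ ∅ (idxLe n i) a b)) with hfdef
  have hf : ∀ (a a' : Fin (n+1) → A) (b b' : Fin (n+1) → B),
      a i = a' i → (∀ j : Fin (n+1), (j:ℕ) ≤ (i:ℕ) → b j = b' j) → f a b = f a' b' := by
    intro a a' b b' ha hb
    have e1 : marg μ {i} (idxLe n i) a b = marg μ {i} (idxLe n i) a' b' :=
      marg_dep (fun j hj => by rw [Finset.mem_singleton.mp hj]; exact ha)
        (fun j hj => hb j (mem_idxLe.mp hj))
    have e2 : marg μ {i} (idxLt n i) a b = marg μ {i} (idxLt n i) a' b' :=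
      marg_dep (fun j hj => by rw [Finset.mem_singleton.mp hj]; exact ha)
        (fun j hj => hb j (le_of_lt (mem_idxLt.mp hj)))
    have e3 : marg μ ∅ (idxLt n i) a b = marg μ ∅ (idxLt n i) a' b' :=
      marg_dep (fun j hj => absurd hj (Finset.notMem_empty j))
        (fun j hj => hb j (le_of_lt (mem_idxLt.mp hj)))
    have e4 : marg μ ∅ (idxLe n i) a b = marg μ ∅ (idxLe n i) a' b' :=
      marg_dep (fun j hj => absurd hj (Finset.notMem_empty j))
        (fun j hj => hb j (mem_idxLe.mp hj))
    rw [hfdef]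
    simp only []
    rw [e1, e2, e3, e4]
  have h1 : cmi μ {i} i (idxLt n i) = ∑ a : Fin (n+1) → A, ∑ b : Fin (n+1) → B, μ a b * f a b := by
    unfold cmi
    rw [insert_idxLt]
  have h2 : cmi μ' {i} i (idxLt n i)
      = ∑ a : Fin (n+1) → A, ∑ b : Fin (n+1) → B, μ' a b * f a b := by
    unfold cmi
    rw [insert_idxLt]
    apply Finset.sum_congr rfl; intro a _
    apply Finset.sum_congr rfl; intro b _
    have r3 : marg μ' ∅ (idxLt n i) a b = marg μ ∅ (idxLt n i) a b := by
      rw [marg_empty_eq_margB, marg_empty_eq_margB, ← hblt b]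
    have r4 : marg μ' ∅ (idxLe n i) a b = marg μ ∅ (idxLe n i) a b := by
      rw [marg_empty_eq_margB, marg_empty_eq_margB, ← hble b]
    rw [hfdef]
    simp only []
    rw [← hsle a b, ← hslt a b, r3, r4]
  rw [h1, h2]
  exact group_sum μ μ' i f hf hsle

lemma DI_piK_eq (Q P : Fin (n+1) → (Fin (n+1) → A) → (Fin (n+1) → B) → ℝ)
    (hQ : IsChannel Q) (hP : IsInput P)
    (hQA : ∀ (i : Fin (n+1)) (a a' : Fin (n+1) → A) (b b' : Fin (n+1) → B),
      a i = a' i → (∀ j : Fin (n+1), (j:ℕ) ≤ (i:ℕ) → b j = b' j) → Q i a b = Q i a' b')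
    [Nonempty A] : DI (joint Q P) = DI (joint Q (piK Q P)) := by
  rw [DI_eq_sum_single Q P hQ hP hQA,
    DI_eq_sum_single Q (piK Q P) hQ (isInput_piK Q P hQ hP) hQA]
  exact Finset.sum_congr rfl fun i _ => cmi_single_eq Q P hQ hP hQA i

/-- for a Class A channel, the supremum of directed information over all
feedback input kernels equals the supremum over input kernels of the form
`π_i(a_i | b^{i-1})` (no dependence on past inputs), and for such restricted inputs
`I(A^n → B^n) = ∑_i I(A_i; B_i | B^{i-1})`. -/
theorem stmt3 (Q : Fin (n+1) → (Fin (n+1) → A) → (Fin (n+1) → B) → ℝ)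
    (hQ : IsChannel Q)
    (hQA : ∀ (i : Fin (n+1)) (a a' : Fin (n+1) → A) (b b' : Fin (n+1) → B),
      a i = a' i → (∀ j : Fin (n+1), (j:ℕ) ≤ (i:ℕ) → b j = b' j) → Q i a b = Q i a' b') :
    sSup {x : ℝ | ∃ P : Fin (n+1) → (Fin (n+1) → A) → (Fin (n+1) → B) → ℝ,
        IsInput P ∧ x = DI (joint Q P)}
      = sSup {x : ℝ | ∃ P : Fin (n+1) → (Fin (n+1) → A) → (Fin (n+1) → B) → ℝ,
          IsInput P ∧
          (∀ (i : Fin (n+1)) (a a' : Fin (n+1) → A) (b : Fin (n+1) → B),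
            a i = a' i → P i a b = P i a' b) ∧
          x = DI (joint Q P)}
    ∧ ∀ P : Fin (n+1) → (Fin (n+1) → A) → (Fin (n+1) → B) → ℝ,
        IsInput P →
        (∀ (i : Fin (n+1)) (a a' : Fin (n+1) → A) (b : Fin (n+1) → B),
          a i = a' i → P i a b = P i a' b) →
        DI (joint Q P) = ∑ i : Fin (n+1), cmi (joint Q P) {i} i (idxLt n i) := by
  constructor
  · apply congrArg sSup
    ext x
    simp only [Set.mem_setOf_eq]
    constructor
    · rintro ⟨P, hP, rfl⟩
      rcases isEmpty_or_nonempty A with hA | hA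
      · exact ⟨P, hP, fun i a a' b h => (hA.false (a i)).elim, rfl⟩
      · exact ⟨piK Q P, isInput_piK Q P hQ hP, piK_res Q P, DI_piK_eq Q P hQ hP hQA⟩
    · rintro ⟨P, hP, _, rfl⟩
      exact ⟨P, hP, rfl⟩
  · intro P hP _
    exact DI_eq_sum_single Q P hQ hP hQA
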